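/- arXiv:2411.18972 — 3 statements merged into one kernel-verified Lean document; each statement's English description precedes it below -/
import Mathlib

section
/- Let f_j(t) be the matching-generating polynomial of a path on j vertices. Then f_j has exactly ⌊j/2⌋ distinct real roots, namely t = −1/(4 cos²(kπ/(j+1))) for integers 1 ≤ k < (j+1)/2. -/
open Classical Polynomial

/-- The matching-generating polynomial `M_G(t) = Σ_{matchings S of G} t^{|S|}` of a finite
graph `G`, where a matching is a set of pairwise disjoint edges. -/
noncomputable def matchPoly {V : Type*} [Fintype V] (G : SimpleGraph V) : Polynomial ℚ :=
  ∑ S ∈ Finset.univ.filter (fun S : Finset (Sym2 V) =>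
      ↑S ⊆ G.edgeSet ∧ (S : Set (Sym2 V)).Pairwise (fun e f => ∀ v, v ∈ e → v ∉ f)),
    Polynomial.X ^ S.card

/-- Fibonacci-type polynomials. -/
noncomputable def FP : ℕ → Polynomial ℚ
  | 0 => 1
  | 1 => 1
  | (n+2) => FP (n+1) + Polynomial.X * FP n

/-- index sets: subsets of `range (j-1)` with no two consecutive. -/
noncomputable def PS (j : ℕ) : Finset (Finset ℕ) :=
  ((Finset.range (j-1)).powerset).filter (fun T => ∀ i ∈ T, i+1 ∉ T)

noncomputable def GP (j : ℕ) : Polynomial ℚ := ∑ T ∈ PS j, Polynomial.X ^ T.card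

lemma mem_PS {j : ℕ} {T : Finset ℕ} :
    T ∈ PS j ↔ T ⊆ Finset.range (j-1) ∧ ∀ i ∈ T, i+1 ∉ T := by
  simp [PS, Finset.mem_filter, Finset.mem_powerset]

lemma PS_filter_not (n : ℕ) : (PS (n+2)).filter (fun T => n ∉ T) = PS (n+1) := by
  ext T
  simp only [Finset.mem_filter, mem_PS, Finset.subset_iff, Finset.mem_range]
  constructor
  · rintro ⟨⟨h1, h2⟩, h3⟩
    refine ⟨?_, h2⟩
    intro x hx
    have := h1 hx
    have : x ≠ n := fun h => h3 (h ▸ hx)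
    omega
  · rintro ⟨h1, h2⟩
    have hn : n ∉ T := fun h => by have := h1 h; omega
    refine ⟨⟨?_, h2⟩, hn⟩
    intro x hx
    have := h1 hx
    omega

lemma PS_filter_mem (n : ℕ) :
    ∑ T ∈ (PS (n+2)).filter (fun T => n ∈ T), (Polynomial.X : ℚ[X]) ^ T.card
      = Polynomial.X * GP n := by
  rw [GP, Finset.mul_sum]
  refine Finset.sum_nbij' (i := fun T => T.erase n) (j := fun T => insert n T) ?_ ?_ ?_ ?_ ?_
  · intro T hT
    simp only [Finset.mem_filter, mem_PS] at hT
    obtain ⟨⟨hsub, hnc⟩, hn⟩ := hT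
    rw [mem_PS]
    constructor
    · intro x hx
      rw [Finset.mem_erase] at hx
      obtain ⟨hxn, hxT⟩ := hx
      have h1 := hsub hxT
      rw [Finset.mem_range] at h1 ⊢
      have h2 : x + 1 ≠ n := fun h => hnc x hxT (h ▸ hn)
      omega
    · intro i hi
      rw [Finset.mem_erase] at hi
      intro h
      exact hnc i hi.2 (Finset.mem_of_mem_erase h)
  · intro T hT
    rw [mem_PS] at hT
    obtain ⟨hsub, hnc⟩ := hT
    simp only [Finset.mem_filter, mem_PS]
    have hTn : ∀ x ∈ T, x < n - 1 := fun x hx => by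
      have := hsub hx; rwa [Finset.mem_range] at this
    refine ⟨⟨fun x hx => ?_, fun i hi => ?_⟩, Finset.mem_insert_self n T⟩
    · rw [Finset.mem_insert] at hx
      rw [Finset.mem_range]
      rcases hx with rfl | hx
      · omega
      · have := hTn x hx; omega
    · rw [Finset.mem_insert] at hi
      intro hcon
      rw [Finset.mem_insert] at hcon
      rcases hi with rfl | hi
      · rcases hcon with h | h
        · omega
        · have := hTn _ h; omega
      · rcases hcon with h | h
        · have := hTn _ hi; omega
        · exact hnc i hi h
  · intro T hT
    simp only [Finset.mem_filter] at hT
    exact Finset.insert_erase hT.2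
  · intro T hT
    rw [mem_PS] at hT
    have : n ∉ T := fun h => by have := hT.1 h; rw [Finset.mem_range] at this; omega
    exact Finset.erase_insert this
  · intro T hT
    simp only [Finset.mem_filter] at hT
    rw [Finset.card_erase_of_mem hT.2]
    have : 1 ≤ T.card := Finset.card_pos.2 ⟨n, hT.2⟩
    rw [← pow_succ']
    congr 1
    omega

lemma GP_rec (n : ℕ) : GP (n+2) = GP (n+1) + Polynomial.X * GP n := by
  rw [GP, ← Finset.sum_filter_add_sum_filter_not (PS (n+2)) (fun T => n ∈ T)]
  rw [PS_filter_not, PS_filter_mem]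
  simp only [GP]
  ring

lemma GP_eq_FP (n : ℕ) : GP n = FP n := by
  have key : ∀ m, GP m = FP m ∧ GP (m+1) = FP (m+1) := by
    intro m
    induction m with
    | zero =>
      constructor <;>
      · have h : Finset.filter (fun T : Finset ℕ => ∀ i ∈ T, i+1 ∉ T) {(∅ : Finset ℕ)} = {∅} := by
          rw [Finset.filter_singleton]
          simp
        simp [GP, FP, PS, Finset.powerset_empty, h]
    | succ k ih => exact ⟨ih.2, by rw [GP_rec, FP, ih.1, ih.2]⟩
  exact (key n).1

open Classical Polynomial

noncomputable def emin {j : ℕ} (e : Sym2 (Fin j)) : ℕ :=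
  Sym2.lift ⟨fun a b => min a.val b.val, fun a b => min_comm _ _⟩ e

lemma edge_mem_iff {j : ℕ} {e : Sym2 (Fin j)} :
    e ∈ (SimpleGraph.pathGraph j).edgeSet ↔
      ∃ i : ℕ, ∃ h : i + 1 < j, e = s(⟨i, by omega⟩, ⟨i+1, h⟩) := by
  induction e using Sym2.ind with
  | _ u v =>
    rw [SimpleGraph.mem_edgeSet, SimpleGraph.pathGraph_adj]
    constructor
    · rintro (h | h)
      · have hv := v.isLt
        refine ⟨u.val, by omega, ?_⟩
        rw [Sym2.eq_iff]
        exact Or.inl ⟨Fin.ext rfl, Fin.ext h.symm⟩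
      · have hu := u.isLt
        refine ⟨v.val, by omega, ?_⟩
        rw [Sym2.eq_swap, Sym2.eq_iff]
        exact Or.inl ⟨Fin.ext rfl, Fin.ext h.symm⟩
    · rintro ⟨i, h, he⟩
      rw [Sym2.eq_iff] at he
      rcases he with ⟨h1, h2⟩ | ⟨h1, h2⟩
      · left; rw [h1, h2]
      · right; rw [h1, h2]

lemma emin_edge {j : ℕ} {i : ℕ} (h : i + 1 < j) :
    emin (s(⟨i, by omega⟩, ⟨i+1, h⟩) : Sym2 (Fin j)) = i := by
  simp [emin, Sym2.lift_mk]

lemma edge_eq_of_emin_eq {j : ℕ} {e f : Sym2 (Fin j)}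
    (he : e ∈ (SimpleGraph.pathGraph j).edgeSet)
    (hf : f ∈ (SimpleGraph.pathGraph j).edgeSet) (h : emin e = emin f) : e = f := by
  rw [edge_mem_iff] at he hf
  obtain ⟨a, ha, rfl⟩ := he
  obtain ⟨b, hb, rfl⟩ := hf
  rw [emin_edge, emin_edge] at h
  subst h
  rfl


lemma mem_matchFinset {V : Type*} [Fintype V] {G : SimpleGraph V} {S : Finset (Sym2 V)} :
    S ∈ Finset.univ.filter (fun S : Finset (Sym2 V) =>
      ↑S ⊆ G.edgeSet ∧ (S : Set (Sym2 V)).Pairwise (fun e f => ∀ v, v ∈ e → v ∉ f)) ↔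
    ↑S ⊆ G.edgeSet ∧ (S : Set (Sym2 V)).Pairwise (fun e f => ∀ v, v ∈ e → v ∉ f) := by
  simp

lemma matchPoly_pathGraph (j : ℕ) : matchPoly (SimpleGraph.pathGraph j) = GP j := by
  rw [matchPoly, GP]
  refine Finset.sum_nbij' (i := fun S => S.image emin)
    (j := fun T => Finset.univ.filter
      (fun e => e ∈ (SimpleGraph.pathGraph j).edgeSet ∧ emin e ∈ T)) ?_ ?_ ?_ ?_ ?_
  · -- forward membership
    intro S hS
    rw [mem_matchFinset] at hS
    obtain ⟨hsub, hpw⟩ := hS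
    rw [mem_PS]
    constructor
    · intro x hx
      rw [Finset.mem_image] at hx
      obtain ⟨e, he, rfl⟩ := hx
      have := hsub he
      rw [edge_mem_iff] at this
      obtain ⟨i, hi, rfl⟩ := this
      rw [emin_edge]
      rw [Finset.mem_range]
      omega
    · intro x hx hx1
      rw [Finset.mem_image] at hx hx1
      obtain ⟨e, he, hex⟩ := hx
      obtain ⟨f, hf, hfx⟩ := hx1
      have he' := hsub he
      have hf' := hsub hf
      rw [edge_mem_iff] at he' hf'
      obtain ⟨a, ha, rfl⟩ := he'
      obtain ⟨b, hb, rfl⟩ := hf'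
      rw [emin_edge] at hex hfx
      subst hex
      have hne : (s(⟨a, by omega⟩, ⟨a+1, ha⟩) : Sym2 (Fin j)) ≠ s(⟨b, by omega⟩, ⟨b+1, hb⟩) := by
        intro hcon
        have := congrArg emin hcon
        rw [emin_edge, emin_edge] at this
        omega
      have := hpw he hf hne (⟨a+1, by omega⟩ : Fin j) ?_ ?_
      · exact this
      · rw [Sym2.mem_iff]; right; rfl
      · rw [Sym2.mem_iff]; left; exact Fin.ext (by simp [hfx])
  · -- backward membership
    intro T hT
    rw [mem_PS] at hT
    obtain ⟨hsub, hnc⟩ := hT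
    rw [mem_matchFinset]
    constructor
    · intro e he
      simp only [Finset.coe_filter, Set.mem_setOf_eq, Finset.mem_univ, true_and] at he
      exact he.1
    · intro e he f hf hne
      simp only [Finset.coe_filter, Set.mem_setOf_eq, Finset.mem_univ, true_and] at he hf
      obtain ⟨he1, he2⟩ := he
      obtain ⟨hf1, hf2⟩ := hf
      rw [edge_mem_iff] at he1 hf1
      obtain ⟨a, ha, rfl⟩ := he1
      obtain ⟨b, hb, rfl⟩ := hf1
      rw [emin_edge] at he2 hf2
      have hab : a ≠ b := by
        intro h; subst h; exact hne rfl
      have h1 : a + 1 ≠ b := fun h => hnc a he2 (h ▸ hf2)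
      have h2 : b + 1 ≠ a := fun h => hnc b hf2 (h ▸ he2)
      intro v hv hv'
      rw [Sym2.mem_iff] at hv hv'
      have hva : v.val = a ∨ v.val = a + 1 := by
        rcases hv with h | h <;> [left; right] <;> rw [h]
      have hvb : v.val = b ∨ v.val = b + 1 := by
        rcases hv' with h | h <;> [left; right] <;> rw [h]
      omega
  · -- left inverse
    intro S hS
    rw [mem_matchFinset] at hS
    obtain ⟨hsub, _⟩ := hS
    ext e
    simp only [Finset.mem_filter, Finset.mem_univ, true_and, Finset.mem_image]
    constructor
    · rintro ⟨he1, f, hf, hfe⟩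
      have := edge_eq_of_emin_eq (hsub hf) he1 hfe
      rwa [← this]
    · intro he
      exact ⟨hsub he, e, he, rfl⟩
  · -- right inverse
    intro T hT
    rw [mem_PS] at hT
    obtain ⟨hsub, _⟩ := hT
    ext x
    simp only [Finset.mem_image, Finset.mem_filter, Finset.mem_univ, true_and]
    constructor
    · rintro ⟨e, ⟨_, he2⟩, rfl⟩
      exact he2
    · intro hx
      have hxr := hsub hx
      rw [Finset.mem_range] at hxr
      refine ⟨s(⟨x, by omega⟩, ⟨x+1, by omega⟩), ⟨?_, ?_⟩, ?_⟩
      · rw [edge_mem_iff]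
        exact ⟨x, by omega, rfl⟩
      · rw [emin_edge]; exact hx
      · rw [emin_edge]
  · -- values
    intro S hS
    rw [mem_matchFinset] at hS
    rw [Finset.card_image_of_injOn]
    intro e he f hf h
    exact edge_eq_of_emin_eq (hS.1 he) (hS.1 hf) h

lemma aeval_FP_rec (t : ℝ) (n : ℕ) :
    aeval t (FP (n+2)) = aeval t (FP (n+1)) + t * aeval t (FP n) := by
  rw [show FP (n+2) = FP (n+1) + Polynomial.X * FP n from rfl]
  simp

lemma FP_pos {t : ℝ} (ht : -(1/4) ≤ t) :
    ∀ n, 0 < aeval t (FP n) ∧ aeval t (FP n) ≤ 2 * aeval t (FP (n+1)) := by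
  intro n
  induction n with
  | zero =>
    rw [show FP 0 = 1 from rfl, show FP 1 = 1 from rfl]
    simp
  | succ k ih =>
    obtain ⟨h1, h2⟩ := ih
    have hk1 : 0 < aeval t (FP (k+1)) := by linarith
    refine ⟨hk1, ?_⟩
    rw [aeval_FP_rec]
    nlinarith

lemma FP_sin (θ : ℝ) (hθ : Real.cos θ ≠ 0) (n : ℕ) :
    Real.sin θ * (2 * Real.cos θ)^n * aeval (-1/(4 * Real.cos θ^2)) (FP n)
      = Real.sin (((n : ℝ)+1) * θ) := by
  · induction n using Nat.twoStepInduction with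
    | zero =>
      rw [show FP 0 = 1 from rfl]
      simp
    | one =>
      rw [show FP 1 = 1 from rfl]
      simp
      norm_num [Real.sin_two_mul]
      ring
    | more k h1 h2 =>
      rw [aeval_FP_rec]
      have key : Real.sin (((k:ℝ)+2+1)*θ)
          = 2*Real.cos θ * Real.sin (((k:ℝ)+1+1)*θ) - Real.sin (((k:ℝ)+1)*θ) := by
        have e1 : ((k:ℝ)+2+1)*θ = ((k:ℝ)+1+1)*θ + θ := by ring
        have e2 : ((k:ℝ)+1)*θ = ((k:ℝ)+1+1)*θ - θ := by ring
        rw [e1, e2, Real.sin_add, Real.sin_sub]; ring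
      push_cast at h1 h2 ⊢
      rw [key, ← h1, ← h2]
      field_simp
      ring

lemma root_iff (j : ℕ) (t : ℝ) :
    aeval t (FP j) = 0 ↔ ∃ k : ℕ, 1 ≤ k ∧ 2*k < j+1 ∧
      t = -1/(4*Real.cos ((k:ℝ)*Real.pi/((j:ℝ)+1))^2) := by
  have hπ := Real.pi_pos
  constructor
  · intro hroot
    -- t must be < -1/4
    have ht : t < -(1/4) := by
      by_contra hcon
      push_neg at hcon
      exact absurd hroot (ne_of_gt (FP_pos hcon j).1)
    have hmt : (0:ℝ) < -t := by linarith
    have hsq : (1:ℝ)/2 < Real.sqrt (-t) := by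
      rw [show (1:ℝ)/2 = Real.sqrt (1/4) by
        rw [show (1:ℝ)/4 = (1/2)^2 by norm_num, Real.sqrt_sq (by norm_num)]]
      exact Real.sqrt_lt_sqrt (by norm_num) (by linarith)
    set c : ℝ := 1/(2*Real.sqrt (-t)) with hc
    have hc0 : 0 < c := by positivity
    have hc1 : c < 1 := by
      rw [hc, div_lt_one (by positivity)]
      linarith
    set θ := Real.arccos c with hθdef
    have hcos : Real.cos θ = c := Real.cos_arccos (by linarith) (by linarith)
    have hθ0 : 0 < θ := Real.arccos_pos.2 hc1
    have hθ2 : θ < Real.pi/2 := Real.arccos_lt_pi_div_two.2 hc0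
    have hcosθ : 0 < Real.cos θ := by rw [hcos]; exact hc0
    have hsinθ : 0 < Real.sin θ := Real.sin_pos_of_pos_of_lt_pi hθ0 (by linarith)
    have hteq : -1/(4*Real.cos θ^2) = t := by
      rw [hcos, hc]
      rw [div_pow, one_pow, mul_pow, Real.sq_sqrt (le_of_lt hmt)]
      field_simp
      ring
    have hs := FP_sin θ (ne_of_gt hcosθ) j
    rw [hteq, hroot, mul_zero] at hs
    obtain ⟨m, hm⟩ := Real.sin_eq_zero_iff.1 hs.symm
    have hm0 : 0 < (m:ℝ) := by
      by_contra hcon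
      push_neg at hcon
      have : (m:ℝ) * Real.pi ≤ 0 := mul_nonpos_iff.2 (Or.inr ⟨hcon, le_of_lt hπ⟩)
      nlinarith [mul_pos (show (0:ℝ) < (j:ℝ)+1 by positivity) hθ0]
    have hm1 : 1 ≤ m := by exact_mod_cast (by exact_mod_cast hm0 : (0:ℤ) < m)
    have hmub : 2*(m:ℝ) < (j:ℝ)+1 := by
      have h1 : (m:ℝ) * Real.pi < ((j:ℝ)+1) * (Real.pi/2) := by
        rw [hm]
        have : (0:ℝ) < (j:ℝ)+1 := by positivity
        nlinarith
      nlinarith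
    have hmub' : 2*m < (j:ℤ)+1 := by exact_mod_cast hmub
    refine ⟨m.toNat, ?_, ?_, ?_⟩
    · omega
    · omega
    · have hmnn : (0:ℤ) ≤ m := by omega
      have hmnat : ((m.toNat : ℕ) : ℝ) = (m:ℝ) := by
        exact_mod_cast Int.toNat_of_nonneg hmnn
      rw [hmnat]
      have hθeq : θ = (m:ℝ) * Real.pi / ((j:ℝ)+1) := by
        have hj1 : (0:ℝ) < (j:ℝ)+1 := by positivity
        field_simp
        linarith [hm]
      rw [← hθeq, hteq]
  · rintro ⟨k, hk1, hk2, rfl⟩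
    set θ := (k:ℝ)*Real.pi/((j:ℝ)+1) with hθdef
    have hj1 : (0:ℝ) < (j:ℝ)+1 := by positivity
    have hθ0 : 0 < θ := by
      rw [hθdef]
      have : (0:ℝ) < (k:ℝ) := by exact_mod_cast hk1
      positivity
    have hθ2 : θ < Real.pi/2 := by
      rw [hθdef, div_lt_iff₀ hj1]
      have : (2*(k:ℝ)) < (j:ℝ)+1 := by exact_mod_cast hk2
      nlinarith
    have hcosθ : 0 < Real.cos θ := Real.cos_pos_of_mem_Ioo ⟨by linarith, hθ2⟩
    have hsinθ : 0 < Real.sin θ := Real.sin_pos_of_pos_of_lt_pi hθ0 (by linarith)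
    have hs := FP_sin θ (ne_of_gt hcosθ) j
    have harg : ((j:ℝ)+1) * θ = (k:ℝ) * Real.pi := by
      rw [hθdef]
      field_simp
    rw [harg] at hs
    have : Real.sin ((k:ℝ) * Real.pi) = 0 := Real.sin_nat_mul_pi k
    rw [this] at hs
    have hne : Real.sin θ * (2*Real.cos θ)^j ≠ 0 := by positivity
    rcases mul_eq_zero.1 hs with h | h
    · exact absurd h hne
    · exact h

/-- The matching-generating polynomial `f_j` of a path on `j` vertices has exactly `⌊j/2⌋`
distinct real roots, namely `t = −1/(4 cos²(kπ/(j+1)))` for integers `1 ≤ k < (j+1)/2`. -/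
theorem stmt11 (j : ℕ) :
    {t : ℝ | Polynomial.aeval t (matchPoly (SimpleGraph.pathGraph j)) = 0}
      = {t : ℝ | ∃ k : ℕ, 1 ≤ k ∧ 2 * k < j + 1 ∧
          t = -1 / (4 * Real.cos (k * Real.pi / (j + 1)) ^ 2)} ∧
    {t : ℝ | Polynomial.aeval t (matchPoly (SimpleGraph.pathGraph j)) = 0}.ncard = j / 2 := by
  have hπ := Real.pi_pos
  have hset : {t : ℝ | Polynomial.aeval t (matchPoly (SimpleGraph.pathGraph j)) = 0}
      = {t : ℝ | ∃ k : ℕ, 1 ≤ k ∧ 2 * k < j + 1 ∧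
          t = -1 / (4 * Real.cos (k * Real.pi / (j + 1)) ^ 2)} := by
    ext t
    rw [Set.mem_setOf_eq, Set.mem_setOf_eq, matchPoly_pathGraph, GP_eq_FP]
    exact root_iff j t
  refine ⟨hset, ?_⟩
  rw [hset]
  have himg : {t : ℝ | ∃ k : ℕ, 1 ≤ k ∧ 2 * k < j + 1 ∧
          t = -1 / (4 * Real.cos (k * Real.pi / (j + 1)) ^ 2)}
      = (fun k : ℕ => -1 / (4 * Real.cos ((k:ℝ) * Real.pi / ((j:ℝ) + 1)) ^ 2)) ''
          (Set.Icc 1 (j/2)) := by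
    ext t
    simp only [Set.mem_setOf_eq, Set.mem_image, Set.mem_Icc]
    constructor
    · rintro ⟨k, h1, h2, rfl⟩
      exact ⟨k, ⟨h1, by omega⟩, rfl⟩
    · rintro ⟨k, ⟨h1, h2⟩, rfl⟩
      exact ⟨k, h1, by omega, rfl⟩
  have hbnd : ∀ x : ℕ, 1 ≤ x → x ≤ j/2 →
      0 < (x:ℝ) * Real.pi / ((j:ℝ)+1) ∧ (x:ℝ) * Real.pi / ((j:ℝ)+1) < Real.pi/2 := by
    intro x h1 h2
    have hj1 : (0:ℝ) < (j:ℝ)+1 := by positivity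
    have hx0 : (0:ℝ) < (x:ℝ) := by exact_mod_cast h1
    constructor
    · positivity
    · rw [div_lt_iff₀ hj1]
      have : (2*(x:ℝ)) < (j:ℝ)+1 := by exact_mod_cast (by omega : 2*x < j+1)
      nlinarith
  have hinj : Set.InjOn (fun k : ℕ => -1 / (4 * Real.cos ((k:ℝ) * Real.pi / ((j:ℝ) + 1)) ^ 2))
      (Set.Icc 1 (j/2)) := by
    intro a ha b hb hab
    simp only [Set.mem_Icc] at ha hb
    obtain ⟨ha0, ha2⟩ := hbnd a ha.1 ha.2
    obtain ⟨hb0, hb2⟩ := hbnd b hb.1 hb.2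
    set θa := (a:ℝ) * Real.pi / ((j:ℝ)+1) with hθa
    set θb := (b:ℝ) * Real.pi / ((j:ℝ)+1) with hθb
    have hca : 0 < Real.cos θa := Real.cos_pos_of_mem_Ioo ⟨by linarith, ha2⟩
    have hcb : 0 < Real.cos θb := Real.cos_pos_of_mem_Ioo ⟨by linarith, hb2⟩
    simp only at hab
    have h4a : (4 * Real.cos θa ^ 2) ≠ 0 := by positivity
    have h4b : (4 * Real.cos θb ^ 2) ≠ 0 := by positivity
    field_simp at hab
    have hc : Real.cos θa = Real.cos θb := by
      rw [mul_comm Real.pi (b:ℝ), neg_inj, one_div, one_div, inv_inj] at hab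
      have h1 : Real.cos θa ^ 2 = Real.cos θb ^ 2 := hab
      nlinarith [h1, hca, hcb]
    have hθeq : θa = θb := by
      refine Real.strictAntiOn_cos.injOn ⟨by linarith, by linarith⟩ ⟨by linarith, by linarith⟩ hc
    rw [hθa, hθb] at hθeq
    have hj1 : ((j:ℝ)+1) ≠ 0 := by positivity
    field_simp at hθeq
    exact_mod_cast hθeq
  rw [himg, Set.ncard_image_of_injOn hinj, Set.ncard_eq_toFinset_card', Set.toFinset_Icc,
    Nat.card_Icc]
  omega
end

section
/- A finite graph G that is a disjoint union of paths is determined up to isomorphism by the pair (|V(G)|, M_G(t)) where M_G is its matching-generating polynomial. That is, if G and H are disjoint unions of paths with |V(G)| = |V(H)| and M_G = M_H, then G ≅ H. -/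
open Classical Polynomial

/-- A graph is a disjoint union of paths if every connected component is isomorphic
(as an induced subgraph) to a path graph. -/
def IsPathUnion {V : Type*} (G : SimpleGraph V) : Prop :=
  ∀ c : G.ConnectedComponent, ∃ m : ℕ,
    Nonempty ((G.induce c.supp) ≃g SimpleGraph.pathGraph m)




/-- matching polynomial of the path on `n` vertices (to be identified later). -/
noncomputable def pA : ℕ → Polynomial ℚ
  | 0 => 1
  | 1 => 1
  | (n+2) => pA (n+1) + X * pA n

/-- geometric sum `1 + X + ... + X^n`. -/
noncomputable def pS (n : ℕ) : Polynomial ℚ := ∑ i ∈ Finset.range (n+1), X ^ i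

lemma pS_succ_succ (n : ℕ) : pS (n+2) = (1 + X) * pS (n+1) - X * pS n := by
  have h1 : pS (n+1) = pS n + X ^ (n+1) := by
    simp [pS, Finset.sum_range_succ]
  have h2 : pS (n+2) = pS (n+1) + X ^ (n+2) := by
    simp [pS, Finset.sum_range_succ]
  rw [h2, h1]; ring

section transfer

abbrev KK := FractionRing (Polynomial ℚ)

noncomputable def qq : KK := algebraMap (Polynomial ℚ) KK X

lemma one_add_qq_ne : (1 + qq) ≠ 0 := by
  have : (algebraMap (Polynomial ℚ) KK) (1 + X) ≠ 0 := by
    rw [map_ne_zero_iff _ (IsFractionRing.injective _ _)]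
    intro h
    have := congrArg (fun p => Polynomial.coeff p 1) h
    simp [Polynomial.coeff_one] at this
  simpa [map_add, qq] using this

noncomputable def tt : KK := - qq / (1 + qq)^2

noncomputable def φq : Polynomial ℚ →ₐ[ℚ] KK := Polynomial.aeval tt

lemma phi_pA (n : ℕ) : φq (pA n) * (1 + qq)^n = algebraMap (Polynomial ℚ) KK (pS n) := by
  induction n using Nat.strong_induction_on with
  | _ n ih =>
    match n with
    | 0 => simp [pA, pS, φq]
    | 1 => simp [pA, pS, Finset.sum_range_succ, φq, qq, map_add, map_one, map_pow]
    | (n+2) =>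
      have h1 := ih (n+1) (by omega)
      have h0 := ih n (by omega)
      have hX : φq (X : Polynomial ℚ) = tt := by simp [φq]
      have hpow : (1 + qq)^(n+2) = (1 + qq)^(n+1) * (1 + qq) := by ring
      have hcancel : tt * (1 + qq)^2 = - qq := by
        rw [tt, div_mul_cancel₀]
        exact pow_ne_zero _ one_add_qq_ne
      calc φq (pA (n+2)) * (1 + qq)^(n+2)
          = φq (pA (n+1)) * (1+qq)^(n+1) * (1+qq)
            + (tt * (1+qq)^2) * (φq (pA n) * (1+qq)^n) := by
            rw [show pA (n+2) = pA (n+1) + X * pA n from rfl]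
            rw [map_add, map_mul, hX]; ring
        _ = algebraMap (Polynomial ℚ) KK (pS (n+1)) * (1+qq)
            + (-qq) * algebraMap (Polynomial ℚ) KK (pS n) := by rw [h1, h0, hcancel]
        _ = algebraMap (Polynomial ℚ) KK ((1+X) * pS (n+1) - X * pS n) := by
            simp only [map_sub, map_mul, map_add, map_one, qq]; ring
        _ = _ := by rw [← pS_succ_succ]

lemma multiset_prod_pow (x : KK) (μ : Multiset ℕ) :
    (μ.map (fun n => x ^ n)).prod = x ^ μ.sum := by
  induction μ using Multiset.induction with
  | empty => simp
  | cons a s ih => simp [ih, pow_add]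

/-- key transfer lemma -/
lemma key_transfer (μ ν : Multiset ℕ) (hsum : μ.sum = ν.sum)
    (h : (μ.map pA).prod = (ν.map pA).prod) :
    (μ.map pS).prod = (ν.map pS).prod := by
  apply IsFractionRing.injective (Polynomial ℚ) KK
  have key : ∀ ρ : Multiset ℕ,
      algebraMap (Polynomial ℚ) KK ((ρ.map pS).prod)
        = φq ((ρ.map pA).prod) * (1 + qq) ^ ρ.sum := by
    intro ρ
    rw [← multiset_prod_pow (1+qq) ρ]
    rw [map_multiset_prod, map_multiset_prod]
    rw [Multiset.map_map, Multiset.map_map, ← Multiset.prod_map_mul]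
    congr 1
    apply Multiset.map_congr rfl
    intro n _
    exact (phi_pA n).symm
  rw [key, key, h, hsum]

end transfer



noncomputable def pT (n : ℕ) : Polynomial ℂ := ∑ i ∈ Finset.range (n+1), X ^ i

lemma map_pS (n : ℕ) : (pS n).map (algebraMap ℚ ℂ) = pT n := by
  simp [pS, pT, Polynomial.map_sum]

lemma pT_mul (n : ℕ) : pT n * (X - 1) = X ^ (n+1) - 1 := geom_sum_mul _ _

lemma sf (n : ℕ) : Squarefree ((X:Polynomial ℂ) ^ (n+1) - 1) := by
  have : ((X:Polynomial ℂ) ^ (n+1) - C 1).Separable :=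
    Polynomial.separable_X_pow_sub_C 1 (by exact_mod_cast Nat.succ_ne_zero n) one_ne_zero
  simpa using this.squarefree

lemma Xpow_ne (n : ℕ) : ((X:Polynomial ℂ) ^ (n+1) - 1) ≠ 0 := by
  intro h
  have := congrArg (fun p => Polynomial.coeff p (n+1)) h
  simp [Polynomial.coeff_one] at this

lemma pT_ne (n : ℕ) : pT n ≠ 0 := by
  intro h
  apply Xpow_ne n
  rw [← pT_mul, h, zero_mul]

lemma rm_le_one {p : Polynomial ℂ} (hp : Squarefree p) (x : ℂ) :
    rootMultiplicity x p ≤ 1 := by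
  by_contra hlt
  push_neg at hlt
  have hd : (X - C x) ^ rootMultiplicity x p ∣ p := Polynomial.pow_rootMultiplicity_dvd p x
  have h2 : (X - C x) * (X - C x) ∣ p := by
    rw [← sq]
    exact dvd_trans (pow_dvd_pow _ hlt) hd
  exact Polynomial.not_isUnit_X_sub_C x (hp _ h2)

lemma rm_pT {k : ℕ} (hk : 2 ≤ k) {ζ : ℂ} (hζ : IsPrimitiveRoot ζ k) (n : ℕ) :
    rootMultiplicity ζ (pT n) = if k ∣ (n+1) then 1 else 0 := by
  have hζ1 : ζ ≠ 1 := hζ.ne_one (by omega)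
  have hmulne : pT n * (X - 1) ≠ 0 := by rw [pT_mul]; exact Xpow_ne n
  have hXm : rootMultiplicity ζ ((X:Polynomial ℂ) - 1) = 0 := by
    apply rootMultiplicity_eq_zero
    simp [Polynomial.IsRoot, sub_eq_zero, hζ1]
  have hsum : rootMultiplicity ζ (pT n) = rootMultiplicity ζ ((X:Polynomial ℂ)^(n+1) - 1) := by
    rw [← pT_mul, rootMultiplicity_mul hmulne, hXm, add_zero]
  rw [hsum]
  by_cases hdvd : k ∣ (n+1)
  · rw [if_pos hdvd]
    have hroot : ((X:Polynomial ℂ)^(n+1) - 1).IsRoot ζ := by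
      simp [Polynomial.IsRoot, sub_eq_zero, (hζ.pow_eq_one_iff_dvd _).2 hdvd]
    have h1 : 0 < rootMultiplicity ζ ((X:Polynomial ℂ)^(n+1) - 1) :=
      (rootMultiplicity_pos (Xpow_ne n)).2 hroot
    have h2 := rm_le_one (sf n) ζ
    omega
  · rw [if_neg hdvd]
    apply rootMultiplicity_eq_zero
    simp only [Polynomial.IsRoot, eval_sub, eval_pow, eval_X, eval_one, sub_eq_zero]
    intro h
    exact hdvd ((hζ.pow_eq_one_iff_dvd _).1 h)

lemma rm_prod (x : ℂ) (μ : Multiset (Polynomial ℂ)) (h0 : ∀ p ∈ μ, p ≠ 0) :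
    rootMultiplicity x μ.prod = (μ.map (rootMultiplicity x)).sum := by
  induction μ using Multiset.induction with
  | empty =>
    simp only [Multiset.prod_zero, Multiset.map_zero, Multiset.sum_zero]
    exact rootMultiplicity_eq_zero (by simp [Polynomial.IsRoot])
  | cons a s ih =>
    have ha : a ≠ 0 := h0 a (Multiset.mem_cons_self a s)
    have hs : s.prod ≠ 0 := by
      intro h
      rw [Multiset.prod_eq_zero_iff] at h
      exact h0 0 (Multiset.mem_cons_of_mem h) rfl
    rw [Multiset.prod_cons, rootMultiplicity_mul (mul_ne_zero ha hs), ih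
      (fun p hp => h0 p (Multiset.mem_cons_of_mem hp)), Multiset.map_cons, Multiset.sum_cons]

lemma sum_ite_eq_card_filter (μ : Multiset ℕ) (p : ℕ → Prop) [DecidablePred p] :
    (μ.map (fun n => if p n then 1 else 0)).sum = Multiset.card (μ.filter p) := by
  induction μ using Multiset.induction with
  | empty => simp
  | cons a s ih =>
    by_cases h : p a <;> simp [Multiset.filter_cons, h, ih, Nat.add_comm]

/-- from products of geometric sums equal, divisibility counts are equal -/
lemma filter_card_eq (μ ν : Multiset ℕ)
    (h : (μ.map pS).prod = (ν.map pS).prod) (k : ℕ) (hk : 2 ≤ k) :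
    Multiset.card (μ.filter (fun n => k ∣ (n+1))) =
    Multiset.card (ν.filter (fun n => k ∣ (n+1))) := by
  have hζ := Complex.isPrimitiveRoot_exp k (by omega)
  set ζ := Complex.exp (2 * Real.pi * Complex.I / k)
  have hmap : ∀ ρ : Multiset ℕ,
      rootMultiplicity ζ ((ρ.map pT).prod) = Multiset.card (ρ.filter (fun n => k ∣ (n+1))) := by
    intro ρ
    rw [rm_prod ζ _ (by intro p hp; obtain ⟨n, _, rfl⟩ := Multiset.mem_map.1 hp; exact pT_ne n)]
    rw [Multiset.map_map]
    rw [← sum_ite_eq_card_filter ρ (fun n => k ∣ (n+1))]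
    congr 1
    apply Multiset.map_congr rfl
    intro n _
    exact rm_pT hk hζ n
  have hprod : ((μ.map pT).prod) = ((ν.map pT).prod) := by
    have := congrArg (Polynomial.map (algebraMap ℚ ℂ)) h
    rw [Polynomial.map_multiset_prod, Polynomial.map_multiset_prod,
      Multiset.map_map, Multiset.map_map] at this
    simpa [Function.comp, map_pS] using this
  rw [← hmap, ← hmap, hprod]

/-- Extraction: multisets of naturals ≥ 2 determined by divisor-filter counts. -/
lemma multiset_eq_of_filter_counts (μ ν : Multiset ℕ)
    (h2 : ∀ x ∈ μ, 2 ≤ x) (h2' : ∀ x ∈ ν, 2 ≤ x)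
    (h : ∀ k, 2 ≤ k → Multiset.card (μ.filter (fun n => k ∣ n)) =
        Multiset.card (ν.filter (fun n => k ∣ n))) : μ = ν := by
  -- bound
  set B := μ.sum + ν.sum + 1 with hB
  have hbμ : ∀ x ∈ μ, x < B := fun x hx =>
    lt_of_le_of_lt (Multiset.le_sum_of_mem hx) (by omega)
  have hbν : ∀ x ∈ ν, x < B := fun x hx =>
    lt_of_le_of_lt (Multiset.le_sum_of_mem hx) (by omega)
  -- card of filter as sum over range of counts
  have hcards : ∀ (ρ : Multiset ℕ) (a : ℕ), (∀ x ∈ ρ, x < B) →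
      Multiset.card (ρ.filter (fun n => a ∣ n)) =
        ∑ b ∈ Finset.range B, if a ∣ b then ρ.count b else 0 := by
    intro ρ a hρ
    set p : ℕ → Prop := fun n => a ∣ n with hp
    rw [← Multiset.toFinset_sum_count_eq (ρ.filter p)]
    rw [Finset.sum_subset (s₁ := (ρ.filter p).toFinset) (s₂ := Finset.range B)]
    · apply Finset.sum_congr rfl
      intro b _
      rw [Multiset.count_filter]
    · intro x hx
      rw [Multiset.mem_toFinset, Multiset.mem_filter] at hx
      exact Finset.mem_range.2 (hρ x hx.1)
    · intro x _ hx
      rw [Multiset.mem_toFinset, Multiset.mem_filter] at hx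
      rw [Multiset.count_filter]
      by_cases hp : p x
      · rw [if_pos hp, Multiset.count_eq_zero]
        intro hmem; exact hx ⟨hmem, hp⟩
      · rw [if_neg hp]
  -- main descending induction
  have key : ∀ d a, 2 ≤ a → B ≤ a + d → μ.count a = ν.count a := by
    intro d
    induction d with
    | zero =>
      intro a _ hBa
      rw [Multiset.count_eq_zero.2 (fun hm => by have := hbμ a hm; omega),
        Multiset.count_eq_zero.2 (fun hm => by have := hbν a hm; omega)]
    | succ d ih =>
      intro a ha hBa
      by_cases haB : B ≤ a
      · rw [Multiset.count_eq_zero.2 (fun hm => by have := hbμ a hm; omega),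
          Multiset.count_eq_zero.2 (fun hm => by have := hbν a hm; omega)]
      push_neg at haB
      have hfμ := hcards μ a hbμ
      have hfν := hcards ν a hbν
      have heq := h a ha
      rw [hfμ, hfν] at heq
      have hmem : a ∈ Finset.range B := Finset.mem_range.2 haB
      rw [← Finset.add_sum_erase _ _ hmem, ← Finset.add_sum_erase _ _ hmem] at heq
      have hrest : ∑ b ∈ (Finset.range B).erase a, (if a ∣ b then μ.count b else 0)
          = ∑ b ∈ (Finset.range B).erase a, (if a ∣ b then ν.count b else 0) := by
        apply Finset.sum_congr rfl
        intro b hb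
        rw [Finset.mem_erase, Finset.mem_range] at hb
        by_cases hd : a ∣ b
        · rw [if_pos hd, if_pos hd]
          by_cases hb0 : b = 0
          · subst hb0
            rw [Multiset.count_eq_zero.2 (fun hm => by have := h2 0 hm; omega),
              Multiset.count_eq_zero.2 (fun hm => by have := h2' 0 hm; omega)]
          · -- b is a proper multiple of a, so b ≥ 2a ≥ a + 2 > a
            obtain ⟨c, rfl⟩ := hd
            have hc2 : 2 ≤ c := by
              rcases c with _ | _ | c
              · omega
              · exact absurd (mul_one a) hb.1
              · omega
            have hab : a + 1 ≤ a * c := by nlinarith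
            exact ih (a * c) (by nlinarith) (by omega)
        · rw [if_neg hd, if_neg hd]
      rw [hrest] at heq
      simp only [dvd_refl, if_pos] at heq
      omega
  rw [Multiset.ext]
  intro a
  by_cases ha : 2 ≤ a
  · exact key B a ha (by omega)
  · rw [Multiset.count_eq_zero.2 (fun hm => by have := h2 a hm; omega),
      Multiset.count_eq_zero.2 (fun hm => by have := h2' a hm; omega)]



def IsMatching' {V : Type*} (G : SimpleGraph V) (S : Finset (Sym2 V)) : Prop :=
  ↑S ⊆ G.edgeSet ∧ (S : Set (Sym2 V)).Pairwise (fun e f => ∀ v, v ∈ e → v ∉ f)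

lemma matchPoly_eq {V : Type*} [Fintype V] (G : SimpleGraph V) :
    matchPoly G = ∑ S ∈ Finset.univ.filter (IsMatching' G), Polynomial.X ^ S.card := by
  unfold matchPoly IsMatching'
  congr

lemma isMatching'_map {V W : Type*} {G : SimpleGraph V} {H : SimpleGraph W} (e : G ≃g H)
    {S : Finset (Sym2 V)} (h : IsMatching' G S) :
    IsMatching' H (S.image (Sym2.map e)) := by
  obtain ⟨hedge, hpair⟩ := h
  constructor
  · intro x hx
    simp only [Finset.coe_image, Set.mem_image, Finset.mem_coe] at hx
    obtain ⟨y, hy, rfl⟩ := hx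
    exact e.map_mem_edgeSet_iff.2 (hedge hy)
  · intro x1 hx1 x2 hx2 hne v hv1 hv2
    simp only [Finset.coe_image, Set.mem_image, Finset.mem_coe] at hx1 hx2
    obtain ⟨y1, hy1, rfl⟩ := hx1
    obtain ⟨y2, hy2, rfl⟩ := hx2
    have hyne : y1 ≠ y2 := fun hh => hne (by rw [hh])
    obtain ⟨a, ha, hav⟩ := Sym2.mem_map.1 hv1
    obtain ⟨b, hb, hbv⟩ := Sym2.mem_map.1 hv2
    have hab : a = b := e.toEquiv.injective (show e.toEquiv a = e.toEquiv b from hav.trans hbv.symm)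
    exact hpair hy1 hy2 hyne a ha (hab ▸ hb)

lemma matchPoly_iso {V W : Type*} [Fintype V] [Fintype W] {G : SimpleGraph V}
    {H : SimpleGraph W} (e : G ≃g H) : matchPoly G = matchPoly H := by
  rw [matchPoly_eq, matchPoly_eq]
  have hinj : Function.Injective (Sym2.map ⇑e) := Sym2.map.injective e.toEquiv.injective
  have hinj' : Function.Injective (Sym2.map ⇑e.symm) := Sym2.map.injective e.symm.toEquiv.injective
  have hid : ∀ (S : Finset (Sym2 V)), (S.image (Sym2.map ⇑e)).image (Sym2.map ⇑e.symm) = S := by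
    intro S
    rw [Finset.image_image]
    have : (Sym2.map ⇑e.symm ∘ Sym2.map ⇑e) = id := by
      funext x
      simp [Sym2.map_map, Function.comp]
    rw [this, Finset.image_id]
  have hid' : ∀ (S : Finset (Sym2 W)), (S.image (Sym2.map ⇑e.symm)).image (Sym2.map ⇑e) = S := by
    intro S
    rw [Finset.image_image]
    have : (Sym2.map ⇑e ∘ Sym2.map ⇑e.symm) = id := by
      funext x
      simp [Sym2.map_map, Function.comp]
    rw [this, Finset.image_id]
  apply Finset.sum_nbij' (fun S => S.image (Sym2.map ⇑e)) (fun S => S.image (Sym2.map ⇑e.symm))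
  · intro S hS
    simp only [Finset.mem_filter, Finset.mem_univ, true_and] at hS ⊢
    exact isMatching'_map e hS
  · intro S hS
    simp only [Finset.mem_filter, Finset.mem_univ, true_and] at hS ⊢
    exact isMatching'_map e.symm hS
  · intro S _; exact hid S
  · intro S _; exact hid' S
  · intro S _
    rw [Finset.card_image_of_injective _ hinj]

lemma matchPoly_of_no_edges {V : Type*} [Fintype V] {G : SimpleGraph V}
    (h : G.edgeSet = ∅) : matchPoly G = 1 := by
  rw [matchPoly_eq]
  have : Finset.univ.filter (IsMatching' G) = {∅} := by
    ext S
    simp only [Finset.mem_filter, Finset.mem_univ, true_and, Finset.mem_singleton]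
    constructor
    · rintro ⟨hsub, -⟩
      rw [h, Set.subset_empty_iff, ← Finset.coe_empty] at hsub
      exact Finset.coe_injective hsub
    · rintro rfl
      exact ⟨by simp, by simp⟩
  rw [this]
  simp

/-- matchings of an induced subgraph correspond to matchings supported in the set -/
lemma matchPoly_induce {V : Type*} [Fintype V] (G : SimpleGraph V) (s : Set V) [Fintype s] :
    matchPoly (G.induce s) =
      ∑ S ∈ Finset.univ.filter (fun S => IsMatching' G S ∧ ∀ e ∈ S, ∀ v ∈ e, v ∈ s),
        (Polynomial.X : Polynomial ℚ) ^ S.card := by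
  rw [matchPoly_eq]
  have hinj : Function.Injective (Sym2.map (Subtype.val : s → V)) :=
    Sym2.map.injective Subtype.val_injective
  apply Finset.sum_nbij' (i := fun T => T.image (Sym2.map (Subtype.val : s → V)))
    (j := fun S => S.preimage (Sym2.map (Subtype.val : s → V)) hinj.injOn)
  · intro T hT
    rw [Finset.mem_filter] at hT ⊢
    obtain ⟨-, hedge, hpair⟩ := hT
    refine ⟨Finset.mem_univ _, ⟨?_, ?_⟩, ?_⟩
    · intro x hx
      rw [Finset.coe_image] at hx
      obtain ⟨y, hy, rfl⟩ := hx
      have := hedge hy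
      induction y with
      | _ a b =>
        rw [SimpleGraph.mem_edgeSet] at this
        rw [Sym2.map_pair_eq, SimpleGraph.mem_edgeSet]
        exact this
    · intro x1 hx1 x2 hx2 hne u hu1 hu2
      rw [Finset.coe_image] at hx1 hx2
      obtain ⟨y1, hy1, rfl⟩ := hx1
      obtain ⟨y2, hy2, rfl⟩ := hx2
      have hyne : y1 ≠ y2 := fun hh => hne (by rw [hh])
      obtain ⟨a, ha, hav⟩ := Sym2.mem_map.1 hu1
      obtain ⟨b, hb, hbv⟩ := Sym2.mem_map.1 hu2
      have hab : a = b := Subtype.val_injective (hav.trans hbv.symm)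
      exact hpair (Finset.mem_coe.2 hy1) (Finset.mem_coe.2 hy2) hyne a ha (hab ▸ hb)
    · intro e he u hu
      rw [Finset.mem_image] at he
      obtain ⟨y, hy, rfl⟩ := he
      obtain ⟨a, -, rfl⟩ := Sym2.mem_map.1 hu
      exact a.2
  · intro S hS
    rw [Finset.mem_filter] at hS ⊢
    obtain ⟨-, ⟨hedge, hpair⟩, hsupp⟩ := hS
    refine ⟨Finset.mem_univ _, ?_, ?_⟩
    · intro x hx
      rw [Finset.mem_coe, Finset.mem_preimage] at hx
      have := hedge hx
      induction x with
      | _ a b =>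
        rw [Sym2.map_pair_eq, SimpleGraph.mem_edgeSet] at this
        exact this
    · intro x1 hx1 x2 hx2 hne u hu1 hu2
      rw [Finset.mem_coe, Finset.mem_preimage] at hx1 hx2
      have hmapne : Sym2.map (Subtype.val : s → V) x1 ≠ Sym2.map _ x2 :=
        fun hh => hne (hinj hh)
      exact hpair hx1 hx2 hmapne (u : V) (Sym2.mem_map.2 ⟨u, hu1, rfl⟩)
        (Sym2.mem_map.2 ⟨u, hu2, rfl⟩)
  · intro T _
    ext x
    rw [Finset.mem_preimage, Finset.mem_image]
    constructor
    · rintro ⟨y, hy, he⟩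
      rwa [← hinj he]
    · intro hx
      exact ⟨x, hx, rfl⟩
  · intro S hS
    rw [Finset.mem_filter] at hS
    obtain ⟨-, -, hsupp⟩ := hS
    ext e
    rw [Finset.mem_image]
    constructor
    · rintro ⟨y, hy, rfl⟩
      exact Finset.mem_preimage.1 hy
    · intro he
      induction e with
      | _ a b =>
        have ha : a ∈ s := hsupp _ he a (Sym2.mem_mk_left _ _)
        have hb : b ∈ s := hsupp _ he b (Sym2.mem_mk_right _ _)
        refine ⟨s(⟨a, ha⟩, ⟨b, hb⟩), ?_, ?_⟩
        · rw [Finset.mem_preimage, Sym2.map_pair_eq]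
          exact he
        · rw [Sym2.map_pair_eq]
  · intro T _
    rw [Finset.card_image_of_injective _ hinj]

lemma matchPoly_pendant {V : Type*} [Fintype V] (G : SimpleGraph V) (v w : V)
    [Fintype ↥{u | u ≠ v}] [Fintype ↥{u | u ≠ v ∧ u ≠ w}]
    (hvw : G.Adj v w) (huniq : ∀ u, G.Adj v u → u = w) :
    matchPoly G = matchPoly (G.induce {u | u ≠ v})
      + Polynomial.X * matchPoly (G.induce {u | u ≠ v ∧ u ≠ w}) := by
  rw [matchPoly_eq]
  rw [← Finset.sum_filter_add_sum_filter_not (Finset.univ.filter (IsMatching' G))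
    (fun S => s(v, w) ∈ S)]
  have hvw' : v ≠ w := G.ne_of_adj hvw
  rw [add_comm]
  congr 1
  · -- matchings without the pendant edge = matchings avoiding v
    rw [matchPoly_induce]
    apply Finset.sum_congr _ (fun _ _ => rfl)
    ext S
    simp only [Finset.mem_filter, Finset.mem_univ, true_and]
    constructor
    · rintro ⟨hm, hnot⟩
      refine ⟨hm, fun e he u hu => ?_⟩
      intro huv
      subst huv
      have hedge := hm.1 (Finset.mem_coe.2 he)
      have hother := Sym2.other_spec hu
      have hadj : G.Adj u (Sym2.Mem.other hu) := by
        rw [← SimpleGraph.mem_edgeSet, hother]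
        exact hedge
      have := huniq _ hadj
      rw [this] at hother
      exact hnot (hother ▸ he)
    · rintro ⟨hm, hsupp⟩
      refine ⟨hm, fun hmem => ?_⟩
      exact hsupp _ hmem v (Sym2.mem_mk_left _ _) rfl
  · -- matchings with the pendant edge
    rw [matchPoly_induce, Finset.mul_sum]
    apply Finset.sum_nbij' (i := fun S => S.erase s(v, w)) (j := fun T => insert s(v, w) T)
    · intro S hS
      simp only [Finset.mem_filter, Finset.mem_univ, true_and] at hS ⊢
      obtain ⟨⟨hedge, hpair⟩, hmem⟩ := hS
      refine ⟨⟨fun e he => hedge (Finset.mem_coe.2 (Finset.mem_of_mem_erase (Finset.mem_coe.1 he))),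
        hpair.mono ?_⟩, ?_⟩
      · intro e he
        exact Finset.mem_coe.2 (Finset.mem_of_mem_erase (Finset.mem_coe.1 he))
      · intro e he u hu
        have hne : e ≠ s(v, w) := Finset.ne_of_mem_erase he
        have he' : e ∈ S := Finset.mem_of_mem_erase he
        have hdisj := hpair (Finset.mem_coe.2 he') (Finset.mem_coe.2 hmem) hne u hu
        rw [Sym2.mem_iff] at hdisj
        push_neg at hdisj
        exact hdisj
    · intro T hT
      simp only [Finset.mem_filter, Finset.mem_univ, true_and] at hT ⊢
      obtain ⟨⟨hedge, hpair⟩, hsupp⟩ := hT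
      have hvnotin : s(v, w) ∉ T := by
        intro hmem
        exact (hsupp _ hmem v (Sym2.mem_mk_left _ _)).1 rfl
      constructor
      · constructor
        · intro e he
          rw [Finset.coe_insert, Set.mem_insert_iff] at he
          rcases he with rfl | he
          · exact G.mem_edgeSet.2 hvw
          · exact hedge he
        · rw [Finset.coe_insert]
          apply Set.Pairwise.insert
          · exact hpair
          · intro e he hne
            constructor
            · intro u hu hue
              rw [Sym2.mem_iff] at hu
              rcases hu with rfl | rfl
              · exact (hsupp _ (Finset.mem_coe.1 he) u hue).1 rfl
              · exact (hsupp _ (Finset.mem_coe.1 he) u hue).2 rfl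
            · intro u hu hue
              rw [Sym2.mem_iff] at hue
              rcases hue with rfl | rfl
              · exact (hsupp _ (Finset.mem_coe.1 he) u hu).1 rfl
              · exact (hsupp _ (Finset.mem_coe.1 he) u hu).2 rfl
      · exact Finset.mem_insert_self _ _
    · intro S hS
      simp only [Finset.mem_filter] at hS
      exact Finset.insert_erase hS.2
    · intro T hT
      simp only [Finset.mem_filter, Finset.mem_univ, true_and] at hT
      apply Finset.erase_insert
      intro hmem
      exact (hT.2 _ hmem v (Sym2.mem_mk_left _ _)).1 rfl
    · intro S hS
      simp only [Finset.mem_filter] at hS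
      have hcard := Finset.card_erase_add_one hS.2
      rw [← hcard, pow_succ]
      ring


def pathIsoA (n : ℕ) :
    ((SimpleGraph.pathGraph (n+2)).induce {u | u ≠ Fin.last (n+1)}) ≃g
      SimpleGraph.pathGraph (n+1) where
  toEquiv :=
  { toFun := fun u => ⟨u.1.1, by
      have h1 : u.1.1 < n+2 := u.1.2
      have h2 : u.1.1 ≠ n+1 := fun h => u.2 (Fin.ext (by simp [h, Fin.val_last]))
      omega⟩
    invFun := fun i => ⟨⟨i.1, by omega⟩, by
      intro h
      have := congrArg Fin.val h
      simp [Fin.val_last] at this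
      omega⟩
    left_inv := fun u => Subtype.ext (Fin.ext rfl)
    right_inv := fun i => Fin.ext rfl }
  map_rel_iff' := by
    intro a b
    show (SimpleGraph.pathGraph (n+1)).Adj _ _ ↔ (SimpleGraph.pathGraph (n+2)).Adj a.1 b.1
    rw [SimpleGraph.pathGraph_adj, SimpleGraph.pathGraph_adj]
    exact Iff.rfl

def pathIsoB (n : ℕ) :
    ((SimpleGraph.pathGraph (n+2)).induce
      {u | u ≠ Fin.last (n+1) ∧ u ≠ (⟨n, by omega⟩ : Fin (n+2))}) ≃g
      SimpleGraph.pathGraph n where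
  toEquiv :=
  { toFun := fun u => ⟨u.1.1, by
      have h1 : u.1.1 < n+2 := u.1.2
      have h2 : u.1.1 ≠ n+1 := fun h => u.2.1 (Fin.ext (by simp [h, Fin.val_last]))
      have h3 : u.1.1 ≠ n := fun h => u.2.2 (Fin.ext (by simp [h]))
      omega⟩
    invFun := fun i => ⟨⟨i.1, by omega⟩, by
      constructor
      · intro h
        have := congrArg Fin.val h
        simp [Fin.val_last] at this
        omega
      · intro h
        have := congrArg Fin.val h
        simp at this
        omega⟩
    left_inv := fun u => Subtype.ext (Fin.ext rfl)
    right_inv := fun i => Fin.ext rfl }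
  map_rel_iff' := by
    intro a b
    show (SimpleGraph.pathGraph n).Adj _ _ ↔ (SimpleGraph.pathGraph (n+2)).Adj a.1 b.1
    rw [SimpleGraph.pathGraph_adj, SimpleGraph.pathGraph_adj]
    exact Iff.rfl

lemma pathGraph_edgeSet_empty_zero : (SimpleGraph.pathGraph 0).edgeSet = ∅ := by
  ext e
  induction e with
  | _ a b => exact absurd a.2 (by omega)

lemma pathGraph_edgeSet_empty_one : (SimpleGraph.pathGraph 1).edgeSet = ∅ := by
  ext e
  induction e with
  | _ a b =>
    simp only [SimpleGraph.mem_edgeSet, SimpleGraph.pathGraph_adj, Set.mem_empty_iff_false,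
      iff_false]
    have ha : a.1 = 0 := by omega
    have hb : b.1 = 0 := by omega
    omega

lemma matchPoly_pathGraph_s12 (n : ℕ) : matchPoly (SimpleGraph.pathGraph n) = pA n := by
  induction n using Nat.strong_induction_on with
  | _ n ih =>
    match n with
    | 0 => rw [matchPoly_of_no_edges pathGraph_edgeSet_empty_zero]; rfl
    | 1 => rw [matchPoly_of_no_edges pathGraph_edgeSet_empty_one]; rfl
    | (n+2) =>
      have hadj : (SimpleGraph.pathGraph (n+2)).Adj (Fin.last (n+1)) ⟨n, by omega⟩ := by
        rw [SimpleGraph.pathGraph_adj]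
        right
        simp [Fin.val_last]
      have huniq : ∀ u, (SimpleGraph.pathGraph (n+2)).Adj (Fin.last (n+1)) u →
          u = (⟨n, by omega⟩ : Fin (n+2)) := by
        intro u h
        rw [SimpleGraph.pathGraph_adj] at h
        apply Fin.ext
        simp only [Fin.val_last] at h
        have := u.2
        simp only []
        omega
      rw [matchPoly_pendant _ _ _ hadj huniq,
        matchPoly_iso (pathIsoA n), matchPoly_iso (pathIsoB n), ih (n+1) (by omega),
        ih n (by omega)]
      rfl





section sigma

variable {ι : Type*} {V : ι → Type*}

def sigmaGraph (G : ∀ i, SimpleGraph (V i)) : SimpleGraph (Σ i, V i) where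
  Adj x y := ∃ (i : ι) (a b : V i), (G i).Adj a b ∧ x = ⟨i, a⟩ ∧ y = ⟨i, b⟩
  symm := by constructor; rintro _ _ ⟨i, a, b, h, rfl, rfl⟩; exact ⟨i, b, a, h.symm, rfl, rfl⟩
  loopless := by
    constructor
    rintro _ ⟨i, a, b, h, rfl, h2⟩
    obtain ⟨-, hab⟩ := Sigma.mk.inj_iff.1 h2
    exact h.ne (eq_of_heq hab)

variable {G : ∀ i, SimpleGraph (V i)}

lemma sigmaGraph_adj_mk {i : ι} {a b : V i} :
    (sigmaGraph G).Adj ⟨i, a⟩ ⟨i, b⟩ ↔ (G i).Adj a b := by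
  constructor
  · rintro ⟨j, c, d, h, h1, h2⟩
    obtain ⟨rfl, hac⟩ := Sigma.mk.inj_iff.1 h1
    obtain ⟨-, hbd⟩ := Sigma.mk.inj_iff.1 h2
    rw [eq_of_heq hac, eq_of_heq hbd]
    exact h
  · intro h
    exact ⟨i, a, b, h, rfl, rfl⟩

lemma sigmaGraph_edge_decomp {e : Sym2 (Σ i, V i)} (he : e ∈ (sigmaGraph G).edgeSet) :
    ∃ (i : ι) (e' : Sym2 (V i)), e' ∈ (G i).edgeSet ∧ e = Sym2.map (Sigma.mk i) e' := by
  induction e with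
  | _ x y =>
    rw [SimpleGraph.mem_edgeSet] at he
    obtain ⟨i, a, b, h, rfl, rfl⟩ := he
    exact ⟨i, s(a, b), (G i).mem_edgeSet.2 h, (Sym2.map_pair_eq _ _ _).symm⟩

lemma sym2_sigma_fst_eq {i j : ι} {x : Sym2 (V i)} {y : Sym2 (V j)}
    (h : Sym2.map (Sigma.mk i) x = Sym2.map (Sigma.mk j) y) : i = j := by
  induction x with
  | _ a b =>
    have : (⟨i, a⟩ : Σ i, V i) ∈ Sym2.map (Sigma.mk j) y := by
      rw [← h, Sym2.map_pair_eq]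
      exact Sym2.mem_mk_left _ _
    obtain ⟨m, -, hm⟩ := Sym2.mem_map.1 this
    exact (congrArg Sigma.fst hm).symm

lemma sigma_mk_sym2_injective (i : ι) :
    Function.Injective (Sym2.map (Sigma.mk i) : Sym2 (V i) → Sym2 (Σ i, V i)) :=
  Sym2.map.injective sigma_mk_injective

variable [Fintype ι] [∀ i, Fintype (V i)]

noncomputable def splitM (S : Finset (Sym2 (Σ i, V i))) (i : ι) : Finset (Sym2 (V i)) :=
  S.preimage (Sym2.map (Sigma.mk i)) ((sigma_mk_sym2_injective i).injOn)

noncomputable def glueM (f : ∀ i, Finset (Sym2 (V i))) : Finset (Sym2 (Σ i, V i)) :=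
  Finset.univ.biUnion (fun i => (f i).image (Sym2.map (Sigma.mk i)))

lemma mem_splitM {S : Finset (Sym2 (Σ i, V i))} {i : ι} {x : Sym2 (V i)} :
    x ∈ splitM S i ↔ Sym2.map (Sigma.mk i) x ∈ S := Finset.mem_preimage

lemma mem_glueM {f : ∀ i, Finset (Sym2 (V i))} {y : Sym2 (Σ i, V i)} :
    y ∈ glueM f ↔ ∃ i, ∃ x ∈ f i, Sym2.map (Sigma.mk i) x = y := by
  simp [glueM, Finset.mem_biUnion, Finset.mem_image]

lemma glueM_splitM {S : Finset (Sym2 (Σ i, V i))} (hS : ↑S ⊆ (sigmaGraph G).edgeSet) :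
    glueM (splitM S) = S := by
  ext y
  rw [mem_glueM]
  constructor
  · rintro ⟨i, x, hx, rfl⟩
    exact mem_splitM.1 hx
  · intro hy
    obtain ⟨i, e', -, rfl⟩ := sigmaGraph_edge_decomp (hS hy)
    exact ⟨i, e', mem_splitM.2 hy, rfl⟩

lemma splitM_glueM {f : ∀ i, Finset (Sym2 (V i))} (i : ι) :
    splitM (glueM f) i = f i := by
  ext x
  rw [mem_splitM, mem_glueM]
  constructor
  · rintro ⟨j, z, hz, hmap⟩
    obtain rfl := (sym2_sigma_fst_eq hmap)
    rwa [← sigma_mk_sym2_injective _ hmap]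
  · intro hx
    exact ⟨i, x, hx, rfl⟩

lemma card_glueM (f : ∀ i, Finset (Sym2 (V i))) :
    (glueM f).card = ∑ i, (f i).card := by
  rw [glueM, Finset.card_biUnion]
  · apply Finset.sum_congr rfl
    intro i _
    exact Finset.card_image_of_injective _ (sigma_mk_sym2_injective i)
  · intro i _ j _ hij
    rw [Function.onFun, Finset.disjoint_left]
    intro y hy1 hy2
    obtain ⟨x1, -, rfl⟩ := Finset.mem_image.1 hy1
    obtain ⟨x2, -, hx2⟩ := Finset.mem_image.1 hy2
    exact hij (sym2_sigma_fst_eq hx2.symm)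

lemma isMatching'_splitM {S : Finset (Sym2 (Σ i, V i))} (hS : IsMatching' (sigmaGraph G) S)
    (i : ι) : IsMatching' (G i) (splitM S i) := by
  obtain ⟨hedge, hpair⟩ := hS
  constructor
  · intro x hx
    rw [Finset.mem_coe, mem_splitM] at hx
    induction x with
    | _ a b =>
      have := hedge hx
      rw [Sym2.map_pair_eq, SimpleGraph.mem_edgeSet] at this
      exact (G i).mem_edgeSet.2 (sigmaGraph_adj_mk.1 this)
  · intro x1 hx1 x2 hx2 hne v hv1 hv2
    rw [Finset.mem_coe, mem_splitM] at hx1 hx2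
    have hmapne : Sym2.map (Sigma.mk i) x1 ≠ Sym2.map (Sigma.mk i) x2 :=
      fun h => hne (sigma_mk_sym2_injective i h)
    have h1 : (⟨i, v⟩ : Σ i, V i) ∈ Sym2.map (Sigma.mk i) x1 := Sym2.mem_map.2 ⟨v, hv1, rfl⟩
    have h2 : (⟨i, v⟩ : Σ i, V i) ∈ Sym2.map (Sigma.mk i) x2 := Sym2.mem_map.2 ⟨v, hv2, rfl⟩
    exact hpair hx1 hx2 hmapne _ h1 h2

lemma isMatching'_glueM {f : ∀ i, Finset (Sym2 (V i))} (hf : ∀ i, IsMatching' (G i) (f i)) :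
    IsMatching' (sigmaGraph G) (glueM f) := by
  constructor
  · intro y hy
    rw [Finset.mem_coe, mem_glueM] at hy
    obtain ⟨i, x, hx, rfl⟩ := hy
    induction x with
    | _ a b =>
      have := (hf i).1 hx
      rw [SimpleGraph.mem_edgeSet] at this
      rw [Sym2.map_pair_eq, SimpleGraph.mem_edgeSet]
      exact sigmaGraph_adj_mk.2 this
  · intro y1 hy1 y2 hy2 hne v hv1 hv2
    rw [Finset.mem_coe, mem_glueM] at hy1 hy2
    obtain ⟨i1, x1, hx1, rfl⟩ := hy1
    obtain ⟨i2, x2, hx2, rfl⟩ := hy2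
    obtain ⟨a, ha, hav⟩ := Sym2.mem_map.1 hv1
    obtain ⟨b, hb, hbv⟩ := Sym2.mem_map.1 hv2
    have hi : i1 = i2 := by
      have := hav.trans hbv.symm
      exact congrArg Sigma.fst this
    subst hi
    have hab : a = b := eq_of_heq (Sigma.mk.inj_iff.1 (hav.trans hbv.symm)).2
    subst hab
    by_cases hx : x1 = x2
    · exact hne (by rw [hx])
    · exact (hf i1).2 hx1 hx2 hx a ha hb

lemma matchPoly_sigma (G : ∀ i, SimpleGraph (V i)) :
    matchPoly (sigmaGraph G) = ∏ i, matchPoly (G i) := by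
  simp only [matchPoly_eq]
  have hrhs : (∏ i, ∑ S ∈ Finset.univ.filter (IsMatching' (G i)), (X : Polynomial ℚ) ^ S.card)
      = ∑ f ∈ Fintype.piFinset (fun i => Finset.univ.filter (IsMatching' (G i))),
          (X : Polynomial ℚ) ^ (∑ i, (f i).card) := by
    rw [Finset.prod_univ_sum]
    exact Finset.sum_congr rfl (fun f _ => Finset.prod_pow_eq_pow_sum _ _ _)
  rw [hrhs]
  apply Finset.sum_nbij' (i := fun S => splitM S) (j := fun f => glueM f)
  · intro S hS
    rw [Finset.mem_filter] at hS
    rw [Fintype.mem_piFinset]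
    intro i
    rw [Finset.mem_filter]
    exact ⟨Finset.mem_univ _, isMatching'_splitM hS.2 i⟩
  · intro f hf
    rw [Fintype.mem_piFinset] at hf
    rw [Finset.mem_filter]
    refine ⟨Finset.mem_univ _, isMatching'_glueM (fun i => ?_)⟩
    exact (Finset.mem_filter.1 (hf i)).2
  · intro S hS
    exact glueM_splitM (Finset.mem_filter.1 hS).2.1
  · intro f _
    funext i
    exact splitM_glueM i
  · intro S hS
    congr 1
    conv_lhs => rw [← glueM_splitM (Finset.mem_filter.1 hS).2.1]
    exact card_glueM _

end sigma



section comps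
variable {V : Type*} (G : SimpleGraph V)

def compEquiv : V ≃ Σ c : G.ConnectedComponent, c.supp where
  toFun v := ⟨G.connectedComponentMk v, ⟨v, rfl⟩⟩
  invFun x := x.2
  left_inv v := rfl
  right_inv := by rintro ⟨c, v, rfl⟩; rfl

def isoSigmaComponents :
    G ≃g sigmaGraph (fun c : G.ConnectedComponent => G.induce c.supp) where
  toEquiv := compEquiv G
  map_rel_iff' := by
    intro v w
    show (sigmaGraph (fun c : G.ConnectedComponent => G.induce c.supp)).Adj
      (⟨G.connectedComponentMk v, ⟨v, rfl⟩⟩ : Σ c : G.ConnectedComponent, c.supp)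
      (⟨G.connectedComponentMk w, ⟨w, rfl⟩⟩ : Σ c : G.ConnectedComponent, c.supp) ↔ G.Adj v w
    constructor
    · rintro ⟨c, a, b, h, h1, h2⟩
      have hv : v = (a : V) := congrArg (fun x : Σ c : G.ConnectedComponent, c.supp => (x.2 : V)) h1
      have hw : w = (b : V) := congrArg (fun x : Σ c : G.ConnectedComponent, c.supp => (x.2 : V)) h2
      rw [hv, hw]
      exact h
    · intro h
      have hc : G.connectedComponentMk v = G.connectedComponentMk w :=
        SimpleGraph.ConnectedComponent.sound h.reachable
      refine ⟨G.connectedComponentMk w, ⟨v, hc⟩, ⟨w, rfl⟩, h, ?_, rfl⟩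
      refine Sigma.ext hc ?_
      refine (Subtype.heq_iff_coe_eq ?_).2 rfl
      intro x
      show x ∈ (G.connectedComponentMk v).supp ↔ x ∈ (G.connectedComponentMk w).supp
      rw [hc]
end comps

section congr
variable {ι κ : Type*} {V : ι → Type*} {W : κ → Type*}
  {G : ∀ i, SimpleGraph (V i)} {H : ∀ k, SimpleGraph (W k)}

def sigmaGraphCongr (e : ι ≃ κ) (F : ∀ i, G i ≃g H (e i)) :
    sigmaGraph G ≃g sigmaGraph H where
  toEquiv := Equiv.sigmaCongr e (fun i => (F i).toEquiv)
  map_rel_iff' := by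
    rintro ⟨i, a⟩ ⟨j, b⟩
    have happ : ∀ (i : ι) (a : V i),
        Equiv.sigmaCongr e (fun i => (F i).toEquiv) ⟨i, a⟩ = ⟨e i, F i a⟩ := fun _ _ => rfl
    rw [happ, happ]
    constructor
    · rintro ⟨c, a', b', h, h1, h2⟩
      obtain ⟨hc1, ha⟩ := Sigma.mk.inj_iff.1 h1
      obtain ⟨hc2, hb⟩ := Sigma.mk.inj_iff.1 h2
      have hij : i = j := e.injective (hc1.trans hc2.symm)
      subst hij
      subst hc1
      have ha' := eq_of_heq ha
      have hb' := eq_of_heq hb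
      subst ha'
      subst hb'
      exact ⟨i, a, b, (F i).map_rel_iff.1 h, rfl, rfl⟩
    · rintro ⟨c, a', b', h, h1, h2⟩
      obtain ⟨hc1, ha⟩ := Sigma.mk.inj_iff.1 h1
      obtain ⟨hc2, hb⟩ := Sigma.mk.inj_iff.1 h2
      subst hc1
      subst hc2
      have ha' := eq_of_heq ha
      subst ha'
      have hb' := eq_of_heq hb
      subst hb'
      exact ⟨_, _, _, (F _).map_rel_iff.2 h, rfl, rfl⟩
end congr


set_option maxHeartbeats 1000000 in
noncomputable def pathGraphIsoOfEq {m n : ℕ} (h : m = n) :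
    SimpleGraph.pathGraph m ≃g SimpleGraph.pathGraph n := by subst h; exact RelIso.refl _

lemma multiset_eq_of_filter_counts' (μ ν : Multiset ℕ)
    (h1 : ∀ x ∈ μ, 1 ≤ x) (h1' : ∀ x ∈ ν, 1 ≤ x)
    (h : ∀ k, 2 ≤ k → Multiset.card (μ.filter (fun n => k ∣ (n+1))) =
        Multiset.card (ν.filter (fun n => k ∣ (n+1)))) : μ = ν := by
  have key := multiset_eq_of_filter_counts (μ.map (·+1)) (ν.map (·+1))
    (by intro x hx; obtain ⟨y, hy, rfl⟩ := Multiset.mem_map.1 hx; have := h1 y hy; omega)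
    (by intro x hx; obtain ⟨y, hy, rfl⟩ := Multiset.mem_map.1 hx; have := h1' y hy; omega)
    (by
      intro k hk
      rw [Multiset.filter_map, Multiset.filter_map, Multiset.card_map, Multiset.card_map]
      exact h k hk)
  exact Multiset.map_injective (fun a b hab => by omega) key

lemma multiset_count_card {α : Type*} [Fintype α] (f : α → ℕ) (k : ℕ) :
    Multiset.count k (Multiset.map f Finset.univ.val) = Fintype.card {a : α // f a = k} := by
  classical
  rw [Multiset.count_map, Fintype.card_subtype]
  rw [show (Finset.filter (fun a => f a = k) Finset.univ).card
    = Multiset.card (Multiset.filter (fun a => f a = k) Finset.univ.val) from rfl]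
  congr 1
  apply Multiset.filter_congr
  intro x _
  exact eq_comm


/-- A finite disjoint union of paths is determined up to isomorphism by its number of
vertices and its matching-generating polynomial. -/
theorem stmt12 {V W : Type*} [Fintype V] [Fintype W]
    (G : SimpleGraph V) (H : SimpleGraph W)
    (hG : IsPathUnion G) (hH : IsPathUnion H)
    (hcard : Fintype.card V = Fintype.card W)
    (hM : matchPoly G = matchPoly H) :
    Nonempty (G ≃g H) := by
  classical
  haveI : Fintype G.ConnectedComponent := Fintype.ofFinite _
  haveI : Fintype H.ConnectedComponent := Fintype.ofFinite _
  haveI : ∀ c : G.ConnectedComponent, Fintype ↑c.supp := fun c => Fintype.ofFinite _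
  haveI : ∀ d : H.ConnectedComponent, Fintype ↑d.supp := fun d => Fintype.ofFinite _
  set nG : G.ConnectedComponent → ℕ := fun c => (hG c).choose with hnG
  set nH : H.ConnectedComponent → ℕ := fun d => (hH d).choose with hnH
  have isoG : ∀ c, Nonempty ((G.induce c.supp) ≃g SimpleGraph.pathGraph (nG c)) :=
    fun c => (hG c).choose_spec
  have isoH : ∀ d, Nonempty ((H.induce d.supp) ≃g SimpleGraph.pathGraph (nH d)) :=
    fun d => (hH d).choose_spec
  have hsuppG : ∀ c : G.ConnectedComponent, Fintype.card ↑c.supp = nG c := fun c => by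
    have := Fintype.card_congr (isoG c).some.toEquiv
    simpa using this
  have hsuppH : ∀ d : H.ConnectedComponent, Fintype.card ↑d.supp = nH d := fun d => by
    have := Fintype.card_congr (isoH d).some.toEquiv
    simpa using this
  have hcardG : Fintype.card V = ∑ c, nG c := by
    rw [Fintype.card_congr (compEquiv G), Fintype.card_sigma]
    exact Finset.sum_congr rfl (fun c _ => hsuppG c)
  have hcardH : Fintype.card W = ∑ d, nH d := by
    rw [Fintype.card_congr (compEquiv H), Fintype.card_sigma]
    exact Finset.sum_congr rfl (fun d _ => hsuppH d)
  have hmG : matchPoly G = ∏ c, pA (nG c) := by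
    rw [matchPoly_iso (isoSigmaComponents G), matchPoly_sigma]
    exact Finset.prod_congr rfl
      (fun c _ => (matchPoly_iso (isoG c).some).trans (matchPoly_pathGraph_s12 _))
  have hmH : matchPoly H = ∏ d, pA (nH d) := by
    rw [matchPoly_iso (isoSigmaComponents H), matchPoly_sigma]
    exact Finset.prod_congr rfl
      (fun d _ => (matchPoly_iso (isoH d).some).trans (matchPoly_pathGraph_s12 _))
  set μ : Multiset ℕ := Multiset.map nG Finset.univ.val with hμ
  set ν : Multiset ℕ := Multiset.map nH Finset.univ.val with hν
  have hμprod : (μ.map pA).prod = matchPoly G := by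
    rw [hmG, hμ, Multiset.map_map]
    rfl
  have hνprod : (ν.map pA).prod = matchPoly H := by
    rw [hmH, hν, Multiset.map_map]
    rfl
  have hμsum : μ.sum = Fintype.card V := by
    rw [hcardG, hμ]
    rfl
  have hνsum : ν.sum = Fintype.card W := by
    rw [hcardH, hν]
    rfl
  have hsums : μ.sum = ν.sum := by rw [hμsum, hνsum, hcard]
  have hprods : (μ.map pA).prod = (ν.map pA).prod := by rw [hμprod, hνprod, hM]
  have hSprod := key_transfer μ ν hsums hprods
  have h1μ : ∀ x ∈ μ, 1 ≤ x := by
    intro x hx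
    rw [hμ] at hx
    obtain ⟨c, -, rfl⟩ := Multiset.mem_map.1 hx
    rw [← hsuppG c]
    obtain ⟨v, hv⟩ := c.exists_rep
    exact Fintype.card_pos_iff.2 ⟨⟨v, hv⟩⟩
  have h1ν : ∀ x ∈ ν, 1 ≤ x := by
    intro x hx
    rw [hν] at hx
    obtain ⟨d, -, rfl⟩ := Multiset.mem_map.1 hx
    rw [← hsuppH d]
    obtain ⟨v, hv⟩ := d.exists_rep
    exact Fintype.card_pos_iff.2 ⟨⟨v, hv⟩⟩
  have hμν : μ = ν :=
    multiset_eq_of_filter_counts' μ ν h1μ h1ν (fun k hk => filter_card_eq μ ν hSprod k hk)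
  have hcnt : ∀ k, Fintype.card {c : G.ConnectedComponent // nG c = k}
      = Fintype.card {d : H.ConnectedComponent // nH d = k} := by
    intro k
    rw [← multiset_count_card nG k, ← multiset_count_card nH k, ← hμ, ← hν, hμν]
  let e : G.ConnectedComponent ≃ H.ConnectedComponent :=
    Equiv.ofFiberEquiv (f := nG) (g := nH) (fun k => Fintype.equivOfCardEq (hcnt k))
  have he : ∀ c, nH (e c) = nG c := fun c => Equiv.ofFiberEquiv_map _ c
  exact ⟨(isoSigmaComponents G).trans
    ((sigmaGraphCongr (Equiv.refl _) (fun c => (isoG c).some)).trans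
      ((sigmaGraphCongr e (fun c => pathGraphIsoOfEq (he c).symm)).trans
        ((sigmaGraphCongr (Equiv.refl _) (fun d => (isoH d).some.symm)).trans
          (isoSigmaComponents H).symm)))⟩
end

section
/- The polynomials f_2(t), f_3(t), …, f_n(t) (matching-generating polynomials of paths on 2, …, n vertices) are multiplicatively independent: if f_2^{c_2}···f_n^{c_n} = f_2^{d_2}···f_n^{d_n} with nonnegative integers c_j, d_j, then c_j = d_j for all j. -/
open Classical Polynomial

namespace Stmt13Aux

open Finset

noncomputable def matchSet (m : ℕ) : Finset (Finset (Sym2 (Fin m))) :=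
  Finset.univ.filter (fun S : Finset (Sym2 (Fin m)) =>
      ↑S ⊆ (SimpleGraph.pathGraph m).edgeSet ∧
      (S : Set (Sym2 (Fin m))).Pairwise (fun e f => ∀ v, v ∈ e → v ∉ f))

lemma matchPoly_eq (m : ℕ) :
    matchPoly (SimpleGraph.pathGraph m) = ∑ S ∈ matchSet m, (X : ℚ[X]) ^ S.card := by
  rw [matchPoly]
  refine Finset.sum_congr ?_ (fun _ _ => rfl)
  ext S
  simp only [matchSet, Finset.mem_filter]

lemma mem_matchSet {m : ℕ} {S : Finset (Sym2 (Fin m))} :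
    S ∈ matchSet m ↔ ↑S ⊆ (SimpleGraph.pathGraph m).edgeSet ∧
      (S : Set (Sym2 (Fin m))).Pairwise (fun e f => ∀ v, v ∈ e → v ∉ f) := by
  simp [matchSet]

lemma mem_edge_path {m : ℕ} {a b : Fin m} :
    s(a,b) ∈ (SimpleGraph.pathGraph m).edgeSet ↔ (a.val+1 = b.val ∨ b.val+1 = a.val) := by
  rw [SimpleGraph.mem_edgeSet, SimpleGraph.pathGraph_adj]

/-- The `Sym2` embedding induced by `Fin.castSucc`. -/
def semb (m : ℕ) : Sym2 (Fin m) ↪ Sym2 (Fin (m+1)) :=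
  ⟨Sym2.map Fin.castSucc, Sym2.map.injective (Fin.castSucc_injective m)⟩

@[simp] lemma semb_apply {m : ℕ} (y : Sym2 (Fin m)) :
    semb m y = Sym2.map Fin.castSucc y := rfl

lemma mem_semb {m : ℕ} {v : Fin (m+1)} {y : Sym2 (Fin m)} :
    v ∈ semb m y ↔ ∃ u ∈ y, Fin.castSucc u = v := by
  simp [Sym2.mem_map]

lemma edge_map_iff {m : ℕ} (y : Sym2 (Fin m)) :
    semb m y ∈ (SimpleGraph.pathGraph (m+1)).edgeSet ↔
      y ∈ (SimpleGraph.pathGraph m).edgeSet := by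
  induction y using Sym2.ind with
  | _ a b =>
    rw [semb_apply, Sym2.map_pair_eq, mem_edge_path, mem_edge_path]
    simp [Fin.coe_castSucc]

lemma last_not_mem_semb {m : ℕ} (y : Sym2 (Fin m)) : Fin.last m ∉ semb m y := by
  induction y using Sym2.ind with
  | _ a b =>
    rw [semb_apply, Sym2.map_pair_eq, Sym2.mem_iff]
    rintro (h | h) <;>
      exact absurd (congrArg Fin.val h) (by simp [Fin.val_last, Fin.coe_castSucc]; omega)

lemma exists_semb {m : ℕ} (x : Sym2 (Fin (m+1))) (hx : Fin.last m ∉ x) :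
    ∃ y, x = semb m y := by
  induction x using Sym2.ind with
  | _ a b =>
    rw [Sym2.mem_iff] at hx
    push_neg at hx
    obtain ⟨a', ha⟩ := Fin.eq_castSucc_of_ne_last (Ne.symm hx.1)
    obtain ⟨b', hb⟩ := Fin.eq_castSucc_of_ne_last (Ne.symm hx.2)
    exact ⟨s(a', b'), by rw [semb_apply, Sym2.map_pair_eq, ha, hb]⟩

/-- matchings mapped along `semb` are matchings -/
lemma map_mem_matchSet {m : ℕ} {T : Finset (Sym2 (Fin m))} (hT : T ∈ matchSet m) :
    T.map (semb m) ∈ matchSet (m+1) := by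
  rw [mem_matchSet] at hT ⊢
  obtain ⟨hsub, hpw⟩ := hT
  constructor
  · intro x hx
    rw [Finset.mem_coe, Finset.mem_map] at hx
    obtain ⟨y, hy, rfl⟩ := hx
    exact (edge_map_iff y).2 (hsub hy)
  · rintro x hx x' hx' hne v hvx hvx'
    rw [Finset.mem_coe, Finset.mem_map] at hx hx'
    obtain ⟨y, hy, rfl⟩ := hx
    obtain ⟨y', hy', rfl⟩ := hx'
    have hyne : y ≠ y' := fun h => hne (by rw [h])
    obtain ⟨u, hu, huv⟩ := mem_semb.1 hvx
    obtain ⟨u', hu', huv'⟩ := mem_semb.1 hvx'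
    have : u = u' := Fin.castSucc_injective m (by rw [huv, huv'])
    exact hpw hy hy' hyne u hu (this ▸ hu')

/-- matchings all of whose edges avoid the last vertex come from below -/
lemma exists_unmap {m : ℕ} {S : Finset (Sym2 (Fin (m+1)))} (hS : S ∈ matchSet (m+1))
    (hlast : ∀ x ∈ S, Fin.last m ∉ x) :
    ∃ T ∈ matchSet m, S = T.map (semb m) := by
  have hsub : S ⊆ Finset.univ.map (semb m) := by
    intro x hx
    obtain ⟨y, rfl⟩ := exists_semb x (hlast x hx)
    exact Finset.mem_map_of_mem _ (Finset.mem_univ y)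
  obtain ⟨T, -, rfl⟩ := Finset.subset_map_iff.1 hsub
  refine ⟨T, ?_, rfl⟩
  rw [mem_matchSet] at hS ⊢
  obtain ⟨hsub', hpw⟩ := hS
  constructor
  · intro y hy
    exact (edge_map_iff y).1 (hsub' (Finset.mem_coe.2 (Finset.mem_map_of_mem _ hy)))
  · rintro y hy y' hy' hne u hu hu'
    have h1 : (semb m y) ∈ ((T.map (semb m) : Finset _) : Set (Sym2 (Fin (m+1)))) :=
      Finset.mem_coe.2 (Finset.mem_map_of_mem (semb m) hy)
    have h2 : (semb m y') ∈ ((T.map (semb m) : Finset _) : Set (Sym2 (Fin (m+1)))) :=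
      Finset.mem_coe.2 (Finset.mem_map_of_mem (semb m) hy')
    have hne' : semb m y ≠ semb m y' := fun h => hne ((semb m).injective h)
    exact hpw h1 h2 hne' (Fin.castSucc u) (mem_semb.2 ⟨u, hu, rfl⟩)
      (mem_semb.2 ⟨u, hu', rfl⟩)

end Stmt13Aux

namespace Stmt13Aux
open Finset

/-- the topmost edge of the path graph on `n+2` vertices -/
def ee (n : ℕ) : Sym2 (Fin (n+2)) := s(⟨n, by omega⟩, Fin.last (n+1))

lemma ee_mem_edgeSet (n : ℕ) : ee n ∈ (SimpleGraph.pathGraph (n+2)).edgeSet := by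
  rw [ee, mem_edge_path]
  left; simp [Fin.val_last]

lemma mem_ee {n : ℕ} {v : Fin (n+2)} : v ∈ ee n ↔ v.val = n ∨ v.val = n + 1 := by
  rw [ee, Sym2.mem_iff]
  constructor
  · rintro (rfl | rfl) <;> simp [Fin.val_last]
  · rintro (h | h)
    · left; exact Fin.ext h
    · right; exact Fin.ext (by simp [Fin.val_last, h])

lemma last_mem_ee (n : ℕ) : Fin.last (n+1) ∈ ee n := mem_ee.2 (Or.inr (by simp [Fin.val_last]))

lemma snd_mem_ee (n : ℕ) : (⟨n, by omega⟩ : Fin (n+2)) ∈ ee n := mem_ee.2 (Or.inl rfl)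

lemma edge_eq_ee {n : ℕ} {x : Sym2 (Fin (n+2))}
    (hx : x ∈ (SimpleGraph.pathGraph (n+2)).edgeSet) (hl : Fin.last (n+1) ∈ x) :
    x = ee n := by
  induction x using Sym2.ind with
  | _ a b =>
    rw [mem_edge_path] at hx
    rw [Sym2.mem_iff] at hl
    have hb := b.isLt
    have ha := a.isLt
    have hlast : (Fin.last (n+1)).val = n+1 := rfl
    rcases hl with rfl | rfl
    · rcases hx with h | h
      · omega
      · have hb' : b = (⟨n, by omega⟩ : Fin (n+2)) := by
          apply Fin.ext
          show b.val = n
          omega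
        rw [hb', ee, Sym2.eq_swap]
    · rcases hx with h | h
      · have ha' : a = (⟨n, by omega⟩ : Fin (n+2)) := by
          apply Fin.ext
          show a.val = n
          omega
        rw [ha', ee]
      · omega

lemma matchSet_mono {m : ℕ} {S S' : Finset (Sym2 (Fin m))} (hS : S ∈ matchSet m)
    (hsub : S' ⊆ S) : S' ∈ matchSet m := by
  rw [mem_matchSet] at hS ⊢
  exact ⟨subset_trans (by exact_mod_cast hsub) hS.1, hS.2.mono (by exact_mod_cast hsub)⟩

/-- characterization of matchings not containing `ee n` -/
lemma char_not_ee {n : ℕ} {S : Finset (Sym2 (Fin (n+2)))} :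
    (S ∈ matchSet (n+2) ∧ ee n ∉ S) ↔
      ∃ T ∈ matchSet (n+1), S = T.map (semb (n+1)) := by
  constructor
  · rintro ⟨hS, hee⟩
    refine exists_unmap hS (fun x hx hl => hee ?_)
    have := edge_eq_ee ((mem_matchSet.1 hS).1 hx) hl
    rwa [this] at hx
  · rintro ⟨T, hT, rfl⟩
    refine ⟨map_mem_matchSet hT, fun h => ?_⟩
    obtain ⟨y, -, hy⟩ := Finset.mem_map.1 h
    exact last_not_mem_semb y (hy ▸ last_mem_ee n)

def semb2 (n : ℕ) : Sym2 (Fin n) ↪ Sym2 (Fin (n+2)) := (semb n).trans (semb (n+1))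

lemma val_lt_of_mem_semb2 {n : ℕ} {v : Fin (n+2)} {y : Sym2 (Fin n)}
    (hv : v ∈ semb2 n y) : v.val < n := by
  obtain ⟨u, hu, rfl⟩ := mem_semb.1 hv
  obtain ⟨w, hw, rfl⟩ := mem_semb.1 hu
  simpa using w.isLt

lemma ee_not_mem_map_semb2 {n : ℕ} (T : Finset (Sym2 (Fin n))) :
    ee n ∉ T.map (semb2 n) := by
  intro h
  obtain ⟨y, -, hy⟩ := Finset.mem_map.1 h
  have h2 : (Fin.last (n+1)).val < n := val_lt_of_mem_semb2 (y := y) (hy ▸ last_mem_ee n)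
  rw [Fin.val_last] at h2
  omega

/-- characterization of matchings containing `ee n` -/
lemma char_ee {n : ℕ} {S : Finset (Sym2 (Fin (n+2)))} :
    (S ∈ matchSet (n+2) ∧ ee n ∈ S) ↔
      ∃ T ∈ matchSet n, S = insert (ee n) (T.map (semb2 n)) := by
  constructor
  · rintro ⟨hS, hee⟩
    obtain ⟨hsub, hpw⟩ := mem_matchSet.1 hS
    set S' := S.erase (ee n) with hS'
    have hS'sub : S' ⊆ S := Finset.erase_subset _ _
    have hS'm : S' ∈ matchSet (n+2) := matchSet_mono hS hS'sub
    -- every edge of S' avoids both top vertices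
    have havoid : ∀ x ∈ S', ∀ v : Fin (n+2), v ∈ ee n → v ∉ x := by
      intro x hx v hv
      have hxS : x ∈ S := hS'sub hx
      have hxne : ee n ≠ x := fun h => (Finset.ne_of_mem_erase hx) h.symm
      exact hpw (Finset.mem_coe.2 hee) (Finset.mem_coe.2 hxS) hxne v hv
    have hlast : ∀ x ∈ S', Fin.last (n+1) ∉ x := fun x hx =>
      havoid x hx _ (last_mem_ee n)
    obtain ⟨T1, hT1, hT1eq⟩ := exists_unmap hS'm hlast
    have hlast' : ∀ y ∈ T1, Fin.last n ∉ y := by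
      intro y hy hl
      have hx : semb (n+1) y ∈ S' := hT1eq ▸ Finset.mem_map_of_mem _ hy
      have : Fin.castSucc (Fin.last n) ∈ semb (n+1) y := mem_semb.2 ⟨_, hl, rfl⟩
      have hv : Fin.castSucc (Fin.last n) ∈ ee n := mem_ee.2 (Or.inl (by simp [Fin.val_last]))
      exact havoid _ hx _ hv this
    obtain ⟨T, hT, hTeq⟩ := exists_unmap hT1 hlast'
    refine ⟨T, hT, ?_⟩
    rw [← Finset.insert_erase hee, ← hS', hT1eq, hTeq, Finset.map_map]
    rfl
  · rintro ⟨T, hT, rfl⟩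
    have hmap : T.map (semb2 n) ∈ matchSet (n+2) := by
      have := map_mem_matchSet (map_mem_matchSet hT)
      rwa [Finset.map_map] at this
    obtain ⟨hsub, hpw⟩ := mem_matchSet.1 hmap
    have hins : insert (ee n) (T.map (semb2 n)) ∈ matchSet (n+2) := by
      rw [mem_matchSet, Finset.coe_insert]
      constructor
      · exact Set.insert_subset (ee_mem_edgeSet n) hsub
      · rw [Set.pairwise_insert]
        refine ⟨hpw, fun x hx hne => ⟨fun v hv hvx => ?_, fun v hv hve => ?_⟩⟩
        · obtain ⟨y, hy, rfl⟩ := Finset.mem_map.1 (Finset.mem_coe.1 hx)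
          have := val_lt_of_mem_semb2 hvx
          rcases mem_ee.1 hv with h | h <;> omega
        · obtain ⟨y, hy, rfl⟩ := Finset.mem_map.1 (Finset.mem_coe.1 hx)
          have := val_lt_of_mem_semb2 hv
          rcases mem_ee.1 hve with h | h <;> omega
    exact ⟨hins, Finset.mem_insert_self _ _⟩

theorem matchPoly_rec (n : ℕ) :
    matchPoly (SimpleGraph.pathGraph (n+2)) =
      matchPoly (SimpleGraph.pathGraph (n+1)) + X * matchPoly (SimpleGraph.pathGraph n) := by
  rw [matchPoly_eq, matchPoly_eq, matchPoly_eq]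
  rw [← Finset.sum_filter_add_sum_filter_not (matchSet (n+2)) (fun S => ee n ∉ S)]
  congr 1
  · refine (Finset.sum_bij (fun T _ => T.map (semb (n+1))) ?_ ?_ ?_ ?_).symm
    · intro T hT
      rw [Finset.mem_filter]
      have h := char_not_ee.2 ⟨T, hT, rfl⟩
      exact ⟨h.1, h.2⟩
    · intro T1 h1 T2 h2 h
      exact Finset.map_injective _ h
    · intro S hS
      rw [Finset.mem_filter] at hS
      obtain ⟨T, hT, rfl⟩ := char_not_ee.1 ⟨hS.1, hS.2⟩
      exact ⟨T, hT, rfl⟩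
    · intro T _
      rw [Finset.card_map]
  · have : ∀ T : Finset (Sym2 (Fin n)), (insert (ee n) (T.map (semb2 n))).card = T.card + 1 := by
      intro T
      rw [Finset.card_insert_of_notMem (ee_not_mem_map_semb2 T), Finset.card_map]
    rw [Finset.mul_sum]
    refine (Finset.sum_bij (fun T _ => insert (ee n) (T.map (semb2 n))) ?_ ?_ ?_ ?_).symm
    · intro T hT
      rw [Finset.mem_filter, not_not]
      exact char_ee.2 ⟨T, hT, rfl⟩
    · intro T1 h1 T2 h2 h
      have h' := congrArg (fun s => Finset.erase s (ee n)) h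
      simp only [Finset.erase_insert (ee_not_mem_map_semb2 T1),
        Finset.erase_insert (ee_not_mem_map_semb2 T2)] at h'
      exact Finset.map_injective _ h'
    · intro S hS
      rw [Finset.mem_filter, not_not] at hS
      obtain ⟨T, hT, rfl⟩ := char_ee.1 ⟨hS.1, hS.2⟩
      exact ⟨T, hT, rfl⟩
    · intro T _
      rw [this T, pow_succ, mul_comm]

end Stmt13Aux

namespace Stmt13Aux
open Finset Real

lemma matchSet_zero : matchSet 0 = {∅} := by
  ext S
  simp only [mem_matchSet, Finset.mem_singleton]
  constructor
  · rintro ⟨-, -⟩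
    apply Finset.eq_empty_of_forall_notMem
    intro x _
    induction x using Sym2.ind with
    | _ a b => exact a.elim0
  · rintro rfl; simp

lemma edgeSet_path_one : (SimpleGraph.pathGraph 1).edgeSet = ∅ := by
  ext x
  induction x using Sym2.ind with
  | _ a b =>
    simp only [mem_edge_path, Set.mem_empty_iff_false, iff_false]
    omega

lemma matchSet_one : matchSet 1 = {∅} := by
  ext S
  simp only [mem_matchSet, Finset.mem_singleton]
  constructor
  · rintro ⟨h, -⟩
    rw [edgeSet_path_one, Set.subset_empty_iff] at h
    exact_mod_cast Finset.coe_eq_empty.mp h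
  · rintro rfl; simp

lemma matchPoly_zero : matchPoly (SimpleGraph.pathGraph 0) = 1 := by
  rw [matchPoly_eq, matchSet_zero]; simp

lemma matchPoly_one : matchPoly (SimpleGraph.pathGraph 1) = 1 := by
  rw [matchPoly_eq, matchSet_one]; simp

lemma sin_formula (θ ρ : ℝ) (h1 : 2 * ρ * Real.cos θ = 1) :
    ∀ j : ℕ, Real.sin θ * (Polynomial.aeval (-ρ^2 : ℝ)) (matchPoly (SimpleGraph.pathGraph j))
      = ρ^j * Real.sin (((j:ℝ)+1) * θ) := by
  have key : ∀ j : ℕ,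
      (Real.sin θ * (Polynomial.aeval (-ρ^2 : ℝ)) (matchPoly (SimpleGraph.pathGraph j))
        = ρ^j * Real.sin (((j:ℝ)+1) * θ)) ∧
      (Real.sin θ * (Polynomial.aeval (-ρ^2 : ℝ)) (matchPoly (SimpleGraph.pathGraph (j+1)))
        = ρ^(j+1) * Real.sin (((j:ℝ)+2) * θ)) := by
    intro j
    induction j with
    | zero =>
      constructor
      · rw [matchPoly_zero]
        simp
      · rw [matchPoly_one]
        push_cast
        have h2 : ((0:ℝ)+2) * θ = 2 * θ := by ring
        rw [h2, Real.sin_two_mul]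
        simp only [map_one, mul_one, pow_one]
        linear_combination (-Real.sin θ) * h1
    | succ j ih =>
      obtain ⟨ih0, ih1⟩ := ih
      refine ⟨by push_cast; exact_mod_cast ih1, ?_⟩
      rw [matchPoly_rec j, map_add, map_mul, Polynomial.aeval_X]
      push_cast
      have e1 : (((j:ℝ)+1)+2) * θ = ((j:ℝ)+2) * θ + θ := by ring
      have e2 : ((j:ℝ)+1) * θ = ((j:ℝ)+2) * θ - θ := by ring
      rw [e1, Real.sin_add]
      rw [e2, Real.sin_sub] at ih0
      push_cast
      linear_combination ih1 + (-ρ^2) * ih0 +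
        (-(ρ^(j+1) * Real.sin (((j:ℝ)+2) * θ))) * h1
  exact fun j => (key j).1

/-- For every `N ≥ 2` there is a real number which is a root of `f_N` but of no `f_j`, `j < N`. -/
lemma exists_root (N : ℕ) (hN : 2 ≤ N) :
    ∃ t : ℝ, (Polynomial.aeval t) (matchPoly (SimpleGraph.pathGraph N)) = 0 ∧
      ∀ j : ℕ, j < N → (Polynomial.aeval t) (matchPoly (SimpleGraph.pathGraph j)) ≠ 0 := by
  set θ : ℝ := π / (N+1) with hθ
  have hNpos : (0:ℝ) < (N:ℝ) + 1 := by positivity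
  have hθpos : 0 < θ := by positivity
  have hθlt : θ < π / 2 := by
    rw [hθ, div_lt_div_iff₀ hNpos two_pos]
    nlinarith [pi_pos, (show (3:ℝ) ≤ (N:ℝ) + 1 by exact_mod_cast by omega)]
  have hθltpi : θ < π := lt_trans hθlt (by linarith [pi_pos])
  have hc : 0 < Real.cos θ := Real.cos_pos_of_mem_Ioo ⟨by linarith, hθlt⟩
  have hs : 0 < Real.sin θ := Real.sin_pos_of_pos_of_lt_pi hθpos hθltpi
  set ρ : ℝ := 1 / (2 * Real.cos θ) with hρ
  have hρpos : 0 < ρ := by positivity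
  have h1 : 2 * ρ * Real.cos θ = 1 := by
    rw [hρ]; field_simp
  have hform := sin_formula θ ρ h1
  refine ⟨-ρ^2, ?_, ?_⟩
  · have := hform N
    have hNθ : ((N:ℝ)+1) * θ = π := by
      rw [hθ]; field_simp
    rw [hNθ, Real.sin_pi, mul_zero] at this
    exact (mul_eq_zero.1 this).resolve_left (ne_of_gt hs)
  · intro j hj hzero
    have hNθ : ((N:ℝ)+1) * θ = π := by
      rw [hθ]; field_simp
    have hthis := hform j
    rw [hzero, mul_zero] at hthis
    have hsinpos : 0 < Real.sin (((j:ℝ)+1) * θ) := by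
      apply Real.sin_pos_of_pos_of_lt_pi
      · positivity
      · have hjN : ((j:ℝ)+1) < (N:ℝ)+1 := by exact_mod_cast Nat.succ_lt_succ hj
        calc ((j:ℝ)+1) * θ < ((N:ℝ)+1) * θ := by nlinarith
          _ = π := hNθ
    exact (ne_of_gt (by positivity : (0:ℝ) < ρ^j * Real.sin (((j:ℝ)+1) * θ))) hthis.symm

end Stmt13Aux

namespace Stmt13Aux
open Finset Polynomial

lemma matchPoly_ne_zero (j : ℕ) : matchPoly (SimpleGraph.pathGraph j) ≠ 0 := by
  intro h
  obtain ⟨t, -, hne⟩ := exists_root (j+2) (by omega)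
  exact hne j (by omega) (by rw [h, map_zero])

lemma exponent_eq_top (n : ℕ) (hn : 2 ≤ n) (c d : ℕ → ℕ)
    (h : ∏ j ∈ Finset.Icc 2 n, (matchPoly (SimpleGraph.pathGraph j)) ^ c j
       = ∏ j ∈ Finset.Icc 2 n, (matchPoly (SimpleGraph.pathGraph j)) ^ d j) :
    c n = d n := by
  obtain ⟨t, ht0, htne⟩ := exists_root n hn
  set q : ℕ → ℝ[X] := fun j =>
    Polynomial.map (algebraMap ℚ ℝ) (matchPoly (SimpleGraph.pathGraph j)) with hq
  have hqne : ∀ j, q j ≠ 0 := fun j => Polynomial.map_ne_zero (matchPoly_ne_zero j)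
  have heval : ∀ j, (q j).eval t = (Polynomial.aeval t) (matchPoly (SimpleGraph.pathGraph j)) :=
    fun j => by rw [hq, Polynomial.eval_map, Polynomial.aeval_def]
  have hmap : ∀ e : ℕ → ℕ, Polynomial.map (algebraMap ℚ ℝ)
      (∏ j ∈ Finset.Icc 2 n, (matchPoly (SimpleGraph.pathGraph j)) ^ e j)
      = ∏ j ∈ Finset.Icc 2 n, (q j) ^ e j := by
    intro e
    rw [Polynomial.map_prod]
    exact Finset.prod_congr rfl (fun j _ => Polynomial.map_pow _ _)
  have hq' : ∏ j ∈ Finset.Icc 2 n, (q j) ^ c j = ∏ j ∈ Finset.Icc 2 n, (q j) ^ d j := by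
    rw [← hmap c, ← hmap d, h]
  -- counting roots
  have hcount : ∀ e : ℕ → ℕ,
      Multiset.count t ((∏ j ∈ Finset.Icc 2 n, (q j) ^ e j).roots)
        = ∑ j ∈ Finset.Icc 2 n, e j * Multiset.count t ((q j).roots) := by
    intro e
    have hne : (∏ j ∈ Finset.Icc 2 n, (q j) ^ e j) ≠ 0 :=
      Finset.prod_ne_zero_iff.2 (fun j _ => pow_ne_zero _ (hqne j))
    rw [Polynomial.roots_prod _ _ hne]
    rw [Multiset.count_bind]
    rw [Finset.sum_eq_multiset_sum]
    congr 1
    apply Multiset.map_congr rfl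
    intro j _
    rw [Polynomial.roots_pow, Multiset.count_nsmul]
  have hk0 : ∀ j ∈ Finset.Icc 2 n, j ≠ n → Multiset.count t ((q j).roots) = 0 := by
    intro j hj hjn
    rw [Polynomial.count_roots]
    apply Polynomial.rootMultiplicity_eq_zero
    rw [Polynomial.IsRoot, heval j]
    exact htne j (lt_of_le_of_ne (Finset.mem_Icc.1 hj).2 hjn)
  have hkn : 1 ≤ Multiset.count t ((q n).roots) := by
    rw [Polynomial.count_roots]
    exact (Polynomial.rootMultiplicity_pos (hqne n)).2 (by rw [Polynomial.IsRoot, heval n]; exact ht0)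
  have hsum : ∀ e : ℕ → ℕ,
      ∑ j ∈ Finset.Icc 2 n, e j * Multiset.count t ((q j).roots)
        = e n * Multiset.count t ((q n).roots) := by
    intro e
    apply Finset.sum_eq_single n
    · intro j hj hjn
      rw [hk0 j hj hjn, mul_zero]
    · intro hn'
      exact absurd (Finset.mem_Icc.2 ⟨hn, le_refl n⟩) hn'
  have := congrArg (Multiset.count t ∘ Polynomial.roots) hq'
  simp only [Function.comp_apply] at this
  rw [hcount c, hcount d, hsum c, hsum d] at this
  exact Nat.eq_of_mul_eq_mul_right (by omega) this

lemma main_aux : ∀ n : ℕ, ∀ c d : ℕ → ℕ,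
    (∏ j ∈ Finset.Icc 2 n, (matchPoly (SimpleGraph.pathGraph j)) ^ c j
       = ∏ j ∈ Finset.Icc 2 n, (matchPoly (SimpleGraph.pathGraph j)) ^ d j) →
    ∀ j ∈ Finset.Icc 2 n, c j = d j := by
  intro n
  induction n with
  | zero => intro c d h j hj; simp at hj
  | succ n ih =>
    intro c d h j hj
    rcases Nat.lt_or_ge (n+1) 2 with h2 | h2
    · rw [Finset.mem_Icc] at hj; omega
    · have hicc : Finset.Icc 2 (n+1) = insert (n+1) (Finset.Icc 2 n) :=
        (Finset.insert_Icc_right_eq_Icc_add_one (by omega)).symm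
      have hnotmem : (n+1) ∉ Finset.Icc 2 n := by
        rw [Finset.mem_Icc]; omega
      have hcd : c (n+1) = d (n+1) := exponent_eq_top (n+1) h2 c d h
      rw [hicc, Finset.prod_insert hnotmem, Finset.prod_insert hnotmem, hcd] at h
      have h' := mul_left_cancel₀ (pow_ne_zero _ (matchPoly_ne_zero (n+1))) h
      rcases Finset.mem_insert.1 (hicc ▸ hj) with rfl | hj'
      · exact hcd
      · exact ih c d h' j hj'

end Stmt13Aux


/-- The matching-generating polynomials `f_2, …, f_n` of paths are multiplicatively
independent: equal products of powers force equal exponents. -/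
theorem stmt13 (n : ℕ) (c d : ℕ → ℕ)
    (h : ∏ j ∈ Finset.Icc 2 n, (matchPoly (SimpleGraph.pathGraph j)) ^ c j
       = ∏ j ∈ Finset.Icc 2 n, (matchPoly (SimpleGraph.pathGraph j)) ^ d j) :
    ∀ j ∈ Finset.Icc 2 n, c j = d j := by
  exact Stmt13Aux.main_aux n c d h
end
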